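/- arXiv:1010.6111 — 5 statements merged into one kernel-verified Lean document; each statement's English description precedes it below -/
import Mathlib

section
/- Let (α_n)_{n≥1} and (β_n)_{n≥1} be sequences of real numbers. If α_n ≥ 0 for all n, (α_n) is nondecreasing with α_n → ∞, and the series Σ_{n=1}^∞ α_n β_n converges, then for all sufficiently large N the tail series Σ_{n=N}^∞ β_n converges, and α_N · Σ_{n=N}^∞ β_n → 0 as N → ∞. -/
open Filter

private lemma abel_id (c a : ℕ → ℝ) (N : ℕ) : ∀ M : ℕ,
    ∑ n ∈ Finset.Ico N M, c n * a n =
      (∑ n ∈ Finset.Ico N M, (c n - c (n+1)) * (∑ i ∈ Finset.Ico N (n+1), a i))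
        + c M * ∑ i ∈ Finset.Ico N M, a i := by
  intro M
  induction M with
  | zero => simp
  | succ M ih =>
    rcases le_or_gt N M with h | h
    · simp only [Finset.sum_Ico_succ_top h]
      rw [ih]; ring
    · have h1 : Finset.Ico N (M+1) = ∅ := Finset.Ico_eq_empty (by omega)
      simp [h1]

private lemma tele_sum (c : ℕ → ℝ) (N : ℕ) : ∀ M : ℕ, N ≤ M →
    ∑ n ∈ Finset.Ico N M, (c n - c (n+1)) = c N - c M := by
  intro M hM
  induction M, hM using Nat.le_induction with
  | base => simp
  | succ M hM ih => rw [Finset.sum_Ico_succ_top hM, ih]; ring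

private lemma abel_bound (c a : ℕ → ℝ) (N : ℕ) (ε : ℝ)
    (hc0 : ∀ n, N ≤ n → 0 ≤ c n) (hdec : ∀ n, N ≤ n → c (n+1) ≤ c n)
    (hS : ∀ k, |∑ i ∈ Finset.Ico N k, a i| ≤ ε) (M : ℕ) :
    |∑ n ∈ Finset.Ico N M, c n * a n| ≤ c N * ε := by
  have hε : 0 ≤ ε := (abs_nonneg _).trans (hS N)
  rcases le_or_gt M N with h | h
  · rw [Finset.Ico_eq_empty (by omega)]
    simpa using mul_nonneg (hc0 N le_rfl) hε
  · have hNM : N ≤ M := h.le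
    rw [abel_id]
    have h1 : |∑ n ∈ Finset.Ico N M, (c n - c (n+1)) * (∑ i ∈ Finset.Ico N (n+1), a i)|
        ≤ ∑ n ∈ Finset.Ico N M, (c n - c (n+1)) * ε := by
      refine (Finset.abs_sum_le_sum_abs _ _).trans (Finset.sum_le_sum fun n hn => ?_)
      have hn' : N ≤ n := (Finset.mem_Ico.mp hn).1
      have hnn : 0 ≤ c n - c (n+1) := sub_nonneg.mpr (hdec n hn')
      rw [abs_mul, abs_of_nonneg hnn]
      exact mul_le_mul_of_nonneg_left (hS _) hnn
    have h2 : ∑ n ∈ Finset.Ico N M, (c n - c (n+1)) * ε = (c N - c M) * ε := by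
      rw [← Finset.sum_mul, tele_sum c N M hNM]
    calc |(∑ n ∈ Finset.Ico N M, (c n - c (n+1)) * (∑ i ∈ Finset.Ico N (n+1), a i))
            + c M * ∑ i ∈ Finset.Ico N M, a i|
        ≤ |∑ n ∈ Finset.Ico N M, (c n - c (n+1)) * (∑ i ∈ Finset.Ico N (n+1), a i)|
            + |c M * ∑ i ∈ Finset.Ico N M, a i| := abs_add_le _ _
      _ ≤ (c N - c M) * ε + c M * ε := by
          refine add_le_add (h1.trans h2.le) ?_
          rw [abs_mul, abs_of_nonneg (hc0 M hNM)]
          exact mul_le_mul_of_nonneg_left (hS M) (hc0 M hNM)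
      _ = c N * ε := by ring

/-- **Lemma 2.3(i) (Asmussen).** If `α_n ≥ 0`, `α_n ↑ ∞` and `Σ α_n β_n` converges,
then for all sufficiently large `N` the tail series `Σ_{n ≥ N} β_n` converges, and
`α_N · Σ_{n ≥ N} β_n → 0` as `N → ∞`. -/
theorem abel_tail_estimate (α β : ℕ → ℝ)
    (hα0 : ∀ n, 0 ≤ α n) (hmono : Monotone α) (hatop : Tendsto α atTop atTop)
    (hconv : ∃ l : ℝ,
      Tendsto (fun N : ℕ => ∑ n ∈ Finset.range N, α n * β n) atTop (nhds l)) :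
    ∃ t : ℕ → ℝ,
      (∀ᶠ N : ℕ in atTop,
        Tendsto (fun M : ℕ => ∑ n ∈ Finset.Ico N M, β n) atTop (nhds (t N))) ∧
      Tendsto (fun N : ℕ => α N * t N) atTop (nhds 0) := by
  obtain ⟨l, hA⟩ := hconv
  set A : ℕ → ℝ := fun N => ∑ n ∈ Finset.range N, α n * β n with hAdef
  obtain ⟨N₁, hN₁⟩ := eventually_atTop.mp (hatop.eventually_ge_atTop 1)
  have hpos : ∀ n, N₁ ≤ n → 0 < α n := fun n hn => lt_of_lt_of_le one_pos (hN₁ n hn)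
  -- key estimate
  have key : ∀ N, N₁ ≤ N → ∀ ε : ℝ, (∀ k, N ≤ k → |A k - A N| ≤ ε) →
      ∀ M, |α N * ∑ n ∈ Finset.Ico N M, β n| ≤ ε := by
    intro N hN ε hε M
    have hc1 : α N / α N = 1 := div_self (hpos N hN).ne'
    have hrw : α N * ∑ n ∈ Finset.Ico N M, β n
        = ∑ n ∈ Finset.Ico N M, (α N / α n) * (α n * β n) := by
      rw [Finset.mul_sum]
      refine Finset.sum_congr rfl fun n hn => ?_
      have hn0 : α n ≠ 0 := (hpos n (hN.trans (Finset.mem_Ico.mp hn).1)).ne'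
      field_simp
    have hb := abel_bound (fun n => α N / α n) (fun n => α n * β n) N ε
      (fun n hn => div_nonneg (hα0 N) (hpos n (hN.trans hn)).le)
      (fun n hn => by
        have h1 : 0 < α n := hpos n (hN.trans hn)
        have h2 : α n ≤ α (n+1) := hmono (Nat.le_succ n)
        show α N / α (n+1) ≤ α N / α n
        gcongr
        exact hα0 N)
      (fun k => by
        rcases le_or_gt N k with hk | hk
        · rw [Finset.sum_Ico_eq_sub _ hk]
          exact hε k hk
        · rw [Finset.Ico_eq_empty (by omega)]
          simpa using (abs_nonneg _).trans (hε N le_rfl)) M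
    rw [hrw]
    simpa [hc1] using hb
  -- tail convergence
  have hconvN : ∀ N, N₁ ≤ N →
      ∃ x, Tendsto (fun M => ∑ n ∈ Finset.Ico N M, β n) atTop (nhds x) := by
    intro N hN
    apply cauchySeq_tendsto_of_complete
    rw [Metric.cauchySeq_iff']
    intro ε hε
    obtain ⟨N₂, hN₂⟩ := Metric.cauchySeq_iff.mp hA.cauchySeq (ε/2) (by positivity)
    refine ⟨max N N₂, fun M hM => ?_⟩
    set P := max N N₂ with hP
    have hPN : N ≤ P := le_max_left _ _
    have hP2 : N₂ ≤ P := le_max_right _ _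
    have hP1 : N₁ ≤ P := hN.trans hPN
    have hdiff : (∑ n ∈ Finset.Ico N M, β n) - (∑ n ∈ Finset.Ico N P, β n)
        = ∑ n ∈ Finset.Ico P M, β n := by
      rw [← Finset.sum_Ico_consecutive _ hPN hM]; ring
    have hb : ∀ k, P ≤ k → |A k - A P| ≤ ε/2 := by
      intro k hk
      have := hN₂ k (hP2.trans hk) P hP2
      rw [Real.dist_eq] at this
      exact this.le
    have h1 := key P hP1 (ε/2) hb M
    have hαP : 1 ≤ α P := hN₁ P hP1
    have h2 : |∑ n ∈ Finset.Ico P M, β n| ≤ ε/2 := by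
      calc |∑ n ∈ Finset.Ico P M, β n|
          ≤ α P * |∑ n ∈ Finset.Ico P M, β n| :=
            le_mul_of_one_le_left (abs_nonneg _) hαP
        _ = |α P * ∑ n ∈ Finset.Ico P M, β n| := by
            rw [abs_mul, abs_of_nonneg (hα0 P)]
        _ ≤ ε/2 := h1
    rw [Real.dist_eq, hdiff]
    linarith
  set t : ℕ → ℝ := fun N => limUnder atTop (fun M => ∑ n ∈ Finset.Ico N M, β n) with htdef
  have htt : ∀ N, N₁ ≤ N →
      Tendsto (fun M => ∑ n ∈ Finset.Ico N M, β n) atTop (nhds (t N)) :=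
    fun N hN => tendsto_nhds_limUnder (hconvN N hN)
  refine ⟨t, eventually_atTop.mpr ⟨N₁, htt⟩, ?_⟩
  rw [Metric.tendsto_atTop]
  intro ε hε
  obtain ⟨N₂, hN₂⟩ := Metric.cauchySeq_iff.mp hA.cauchySeq (ε/2) (by positivity)
  refine ⟨max N₁ N₂, fun N hN => ?_⟩
  have hN1 : N₁ ≤ N := (le_max_left _ _).trans hN
  have hNN2 : N₂ ≤ N := (le_max_right _ _).trans hN
  have hb : ∀ k, N ≤ k → |A k - A N| ≤ ε/2 := by
    intro k hk
    have := hN₂ k (hNN2.trans hk) N hNN2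
    rw [Real.dist_eq] at this
    exact this.le
  have h1 := key N hN1 (ε/2) hb
  have h2 : Tendsto (fun M => α N * ∑ n ∈ Finset.Ico N M, β n) atTop
      (nhds (α N * t N)) := (htt N hN1).const_mul _
  have h3 : |α N * t N| ≤ ε/2 := le_of_tendsto h2.abs (Eventually.of_forall h1)
  rw [Real.dist_eq, sub_zero]
  linarith
end

section
/- Let (β_n)_{n≥1} be a sequence of real numbers. If the series Σ_{n=1}^∞ n·β_n converges, then for each n the tail series Σ_{k=n}^∞ β_k converges, and the series Σ_{n=1}^∞ (Σ_{k=n}^∞ β_k) converges. -/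
set_option maxHeartbeats 1000000

open Filter

private lemma aux_abel (β r : ℕ → ℝ) (hβ : ∀ k : ℕ, (k : ℝ) * β k = r k - r (k + 1))
    (n : ℕ) (hn : 1 ≤ n) : ∀ M : ℕ, n ≤ M →
    ∑ k ∈ Finset.Ico n M, β k
      = r n / n - r M / M - ∑ k ∈ Finset.Ico n M, r (k + 1) / ((k : ℝ) * (k + 1)) := by
  intro M
  induction M with
  | zero => intro h; omega
  | succ M ih =>
    intro hnM
    rcases Nat.lt_or_ge M n with hlt | hge
    · have hMn : M + 1 = n := le_antisymm hlt hnM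
      subst hMn
      simp
    · have h1M : 1 ≤ M := le_trans hn hge
      have hM0 : (M : ℝ) ≠ 0 := by positivity
      have hM1 : (M : ℝ) + 1 ≠ 0 := by positivity
      rw [Finset.sum_Ico_succ_top hge, Finset.sum_Ico_succ_top hge, ih hge]
      have hb : β M = (r M - r (M + 1)) / M := by
        rw [← hβ M]; field_simp
      rw [hb]
      push_cast
      field_simp
      ring

private lemma aux_double (β : ℕ → ℝ) : ∀ N : ℕ,
    ∑ n ∈ Finset.Ico 1 N, ∑ k ∈ Finset.Ico n N, β k
      = ∑ k ∈ Finset.range N, (k : ℝ) * β k := by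
  intro N
  induction N with
  | zero => simp
  | succ N ih =>
    rw [Finset.sum_range_succ, ← ih]
    have hsplit : ∀ n ∈ Finset.Ico 1 (N + 1),
        ∑ k ∈ Finset.Ico n (N + 1), β k = (∑ k ∈ Finset.Ico n N, β k) + β N := by
      intro n hn
      rw [Finset.mem_Ico] at hn
      exact Finset.sum_Ico_succ_top (Nat.lt_succ_iff.mp hn.2) _
    rw [Finset.sum_congr rfl hsplit, Finset.sum_add_distrib]
    have hcard : ∑ _n ∈ Finset.Ico 1 (N + 1), β N = (N : ℝ) * β N := by
      rw [Finset.sum_const, Nat.card_Ico]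
      simp [nsmul_eq_mul]
    rw [hcard]
    congr 1
    rcases Nat.eq_zero_or_pos N with h0 | hpos
    · subst h0; simp
    · rw [Finset.sum_Ico_succ_top hpos]
      simp

/-- **Lemma 2.3(ii) (Asmussen).** If `Σ n β_n` converges, then every tail series
`Σ_{k ≥ n} β_k` converges, and the series of tails `Σ_n (Σ_{k ≥ n} β_k)` converges. -/
theorem sum_of_tails_converges (β : ℕ → ℝ)
    (hconv : ∃ l : ℝ,
      Tendsto (fun N : ℕ => ∑ n ∈ Finset.range N, (n : ℝ) * β n) atTop (nhds l)) :
    ∃ t : ℕ → ℝ,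
      (∀ n : ℕ, Tendsto (fun M : ℕ => ∑ k ∈ Finset.Ico n M, β k) atTop (nhds (t n))) ∧
      ∃ L : ℝ, Tendsto (fun N : ℕ => ∑ n ∈ Finset.range N, t n) atTop (nhds L) := by
  obtain ⟨l, hl⟩ := hconv
  set S : ℕ → ℝ := fun N => ∑ n ∈ Finset.range N, (n : ℝ) * β n with hSdef
  set r : ℕ → ℝ := fun N => l - S N with hrdef
  have hr : Tendsto r atTop (nhds 0) := by
    have h := Tendsto.sub (tendsto_const_nhds : Tendsto (fun _ : ℕ => l) atTop (nhds l)) hl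
    simpa using h
  have hβ : ∀ k : ℕ, (k : ℝ) * β k = r k - r (k + 1) := by
    intro k
    simp only [hrdef, hSdef, Finset.sum_range_succ]
    ring
  -- bound on r
  obtain ⟨C, hC⟩ : ∃ C : ℝ, ∀ k : ℕ, |r k| ≤ C := by
    have hb : BddAbove (Set.range fun k => |r k|) :=
      (hr.abs.bddAbove_range)
    obtain ⟨C, hC⟩ := hb
    exact ⟨C, fun k => hC ⟨k, rfl⟩⟩
  have hC0 : 0 ≤ C := le_trans (abs_nonneg _) (hC 0)
  set h : ℕ → ℝ := fun k => r (k + 1) / ((k : ℝ) * (k + 1)) with hhdef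
  have habs : Summable fun k => |h k| := by
    have h2 : Summable fun k : ℕ => C * (1 / (k : ℝ) ^ 2) :=
      (Real.summable_one_div_nat_pow.mpr one_lt_two).mul_left C
    apply h2.of_nonneg_of_le (fun k => abs_nonneg _)
    intro k
    rcases Nat.eq_zero_or_pos k with h0 | hpos
    · subst h0; simp [hhdef]
    · have hk : (0:ℝ) < k := by exact_mod_cast hpos
      have hden : (0:ℝ) < (k : ℝ) * (k + 1) := by positivity
      rw [hhdef]
      rw [abs_div, abs_of_pos hden, div_le_iff₀ hden]
      calc |r (k + 1)| ≤ C := hC _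
        _ = C * (1 / (k:ℝ)^2) * (k:ℝ)^2 := by field_simp
        _ ≤ C * (1 / (k:ℝ)^2) * ((k:ℝ) * (k+1)) := by
            apply mul_le_mul_of_nonneg_left _ (by positivity)
            nlinarith
  have hsum : Summable h := habs.of_abs
  set H : ℕ → ℝ := fun n => (∑' k, h k) - ∑ k ∈ Finset.range n, h k with hHdef
  have htendH : ∀ n : ℕ, Tendsto (fun M => ∑ k ∈ Finset.Ico n M, h k) atTop (nhds (H n)) := by
    intro n
    have h1 : Tendsto (fun M => (∑ k ∈ Finset.range M, h k) - ∑ k ∈ Finset.range n, h k)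
        atTop (nhds (H n)) := hsum.hasSum.tendsto_sum_nat.sub tendsto_const_nhds
    apply h1.congr'
    filter_upwards [eventually_ge_atTop n] with M hM
    rw [Finset.sum_Ico_eq_sub _ hM]
  -- tail limits for n ≥ 1
  set φ : ℕ → ℝ := fun n => r n / n - H n with hφdef
  have htail : ∀ n : ℕ, 1 ≤ n →
      Tendsto (fun M : ℕ => ∑ k ∈ Finset.Ico n M, β k) atTop (nhds (φ n)) := by
    intro n hn
    have hrM : Tendsto (fun M : ℕ => r M / M) atTop (nhds 0) := by
      have := hr.mul tendsto_one_div_atTop_nhds_zero_nat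
      simpa [div_eq_mul_inv, one_div] using this
    have h1 : Tendsto (fun M : ℕ => r n / n - r M / M - ∑ k ∈ Finset.Ico n M, h k)
        atTop (nhds (r n / n - 0 - H n)) :=
      (tendsto_const_nhds.sub hrM).sub (htendH n)
    rw [sub_zero] at h1
    apply h1.congr'
    filter_upwards [eventually_ge_atTop n] with M hM
    exact (aux_abel β r hβ n hn M hM).symm
  set t : ℕ → ℝ := fun n => if n = 0 then β 0 + φ 1 else φ n with htdef
  have hpart1 : ∀ n : ℕ, Tendsto (fun M : ℕ => ∑ k ∈ Finset.Ico n M, β k) atTop (nhds (t n)) := by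
    intro n
    rcases Nat.eq_zero_or_pos n with h0 | hpos
    · subst h0
      have h1 : Tendsto (fun M : ℕ => β 0 + ∑ k ∈ Finset.Ico 1 M, β k) atTop
          (nhds (β 0 + φ 1)) := tendsto_const_nhds.add (htail 1 le_rfl)
      simp only [htdef, if_pos rfl]
      apply h1.congr'
      filter_upwards [eventually_ge_atTop 1] with M hM
      rw [← Finset.sum_Ico_consecutive _ (Nat.zero_le 1) hM]
      simp
    · simp only [htdef, Nat.pos_iff_ne_zero.mp hpos, if_false]
      exact htail n hpos
  refine ⟨t, hpart1, ?_⟩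
  -- N * t N → 0
  have hNH : Tendsto (fun N : ℕ => (N : ℝ) * H N) atTop (nhds 0) := by
    rw [NormedAddCommGroup.tendsto_nhds_zero]
    intro ε hε
    obtain ⟨K, hK⟩ := (Metric.tendsto_atTop.mp hr) (ε / 2) (by positivity)
    filter_upwards [eventually_ge_atTop (max K 1)] with N hN
    have hN1 : 1 ≤ N := le_trans (le_max_right _ _) hN
    have hNK : K ≤ N := le_trans (le_max_left _ _) hN
    have hNpos : (0:ℝ) < N := by exact_mod_cast hN1
    have hHN : H N = ∑' i, h (i + N) := by
      have h2 := Summable.sum_add_tsum_nat_add (f := h) N hsum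
      show (∑' k, h k) - ∑ k ∈ Finset.range N, h k = ∑' i, h (i + N)
      linarith
    have habsN : Summable fun i => |h (i + N)| := (summable_nat_add_iff (f := fun k => |h k|) N).mpr habs
    have hbound : ∑' i, |h (i + N)| ≤ ε / 2 * (1 / N) := by
      apply Summable.tsum_le_of_sum_range_le habsN
      intro m
      have hstep : ∀ i : ℕ, |h (i + N)| ≤ ε / 2 * (1 / ((i : ℝ) + N) - 1 / ((i : ℝ) + 1 + N)) := by
        intro i
        have hi0 : (0:ℝ) ≤ (i:ℝ) := Nat.cast_nonneg i
        have hk : (0:ℝ) < (i:ℝ) + N := by linarith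
        have hk1 : (0:ℝ) < (i:ℝ) + N + 1 := by linarith
        have hden : (0:ℝ) < ((i:ℝ) + N) * ((i:ℝ) + N + 1) := mul_pos hk hk1
        have hrb : |r (i + N + 1)| ≤ ε / 2 := by
          have := hK (i + N + 1) (le_trans hNK (by omega))
          rw [Real.dist_eq, sub_zero] at this
          exact le_of_lt this
        have hval : h (i + N) = r (i + N + 1) / (((i:ℝ) + N) * ((i:ℝ) + N + 1)) := by
          simp only [hhdef]
          push_cast
          ring_nf
        have heq : ε / 2 * (1 / ((i : ℝ) + N) - 1 / ((i : ℝ) + 1 + N))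
            = (ε / 2) / (((i:ℝ) + N) * ((i:ℝ) + N + 1)) := by
          have h3 : ((i:ℝ) + 1 + N) = (i:ℝ) + N + 1 := by ring
          have h1 : ((i:ℝ) + N) ≠ 0 := ne_of_gt hk
          have h2 : ((i:ℝ) + N + 1) ≠ 0 := ne_of_gt hk1
          rw [h3]
          field_simp
          ring
        rw [hval, abs_div, abs_of_pos hden, heq]
        gcongr
      calc ∑ i ∈ Finset.range m, |h (i + N)|
          ≤ ∑ i ∈ Finset.range m, ε / 2 * (1 / ((i : ℝ) + N) - 1 / ((i : ℝ) + 1 + N)) :=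
            Finset.sum_le_sum fun i _ => hstep i
        _ = ε / 2 * (1 / (N:ℝ) - 1 / ((m:ℝ) + N)) := by
            rw [← Finset.mul_sum]
            congr 1
            have h3 := Finset.sum_range_sub' (fun i : ℕ => 1 / ((i : ℝ) + N)) m
            push_cast at h3
            simpa using h3
        _ ≤ ε / 2 * (1 / N) := by
            apply mul_le_mul_of_nonneg_left _ (by positivity)
            have : (0:ℝ) ≤ 1 / ((m:ℝ) + N) := by positivity
            linarith
    have habsle : |H N| ≤ ε / 2 * (1 / N) := by
      rw [hHN]
      calc |∑' i, h (i + N)| ≤ ∑' i, |h (i + N)| := by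
            have h4 := norm_tsum_le_tsum_norm (f := fun i => h (i + N))
              (by simpa [Real.norm_eq_abs] using habsN)
            simpa [Real.norm_eq_abs] using h4
        _ ≤ ε / 2 * (1 / N) := hbound
    have : |(N:ℝ) * H N| ≤ ε / 2 := by
      rw [abs_mul, abs_of_pos hNpos]
      calc (N:ℝ) * |H N| ≤ (N:ℝ) * (ε / 2 * (1 / N)) :=
            mul_le_mul_of_nonneg_left habsle (le_of_lt hNpos)
        _ = ε / 2 := by field_simp
    calc ‖(N:ℝ) * H N‖ = |(N:ℝ) * H N| := rfl
      _ ≤ ε / 2 := this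
      _ < ε := by linarith
  have hNt : Tendsto (fun N : ℕ => (N : ℝ) * t N) atTop (nhds 0) := by
    have h1 : Tendsto (fun N : ℕ => r N - (N:ℝ) * H N) atTop (nhds 0) := by
      have := hr.sub hNH
      simpa using this
    apply h1.congr'
    filter_upwards [eventually_ge_atTop 1] with N hN
    have hN0 : (N:ℝ) ≠ 0 := by
      have : (0:ℝ) < N := by exact_mod_cast hN
      exact ne_of_gt this
    simp only [htdef, hφdef, Nat.pos_iff_ne_zero.mp hN, if_false]
    field_simp
  have ht0 : Tendsto (fun N : ℕ => t N) atTop (nhds 0) := by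
    have h1 : Tendsto (fun N : ℕ => ((N:ℝ) * t N) * (1 / N)) atTop (nhds (0 * 0)) :=
      hNt.mul tendsto_one_div_atTop_nhds_zero_nat
    rw [mul_zero] at h1
    apply h1.congr'
    filter_upwards [eventually_ge_atTop 1] with N hN
    have hN0 : (N:ℝ) ≠ 0 := by
      have : (0:ℝ) < N := by exact_mod_cast hN
      exact ne_of_gt this
    field_simp
  -- key identity: t n = ∑_{k ∈ Ico n N} β k + t N
  have hkey : ∀ n N : ℕ, n ≤ N → t n = (∑ k ∈ Finset.Ico n N, β k) + t N := by
    intro n N hnN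
    have h1 : Tendsto (fun M : ℕ => (∑ k ∈ Finset.Ico n N, β k) + ∑ k ∈ Finset.Ico N M, β k)
        atTop (nhds ((∑ k ∈ Finset.Ico n N, β k) + t N)) :=
      tendsto_const_nhds.add (hpart1 N)
    refine tendsto_nhds_unique (hpart1 n) (h1.congr' ?_)
    filter_upwards [eventually_ge_atTop N] with M hM
    rw [Finset.sum_Ico_consecutive _ hnN hM]
  -- partial sums of t
  have hps : ∀ N : ℕ, 1 ≤ N →
      ∑ n ∈ Finset.range N, t n = t 0 + S N + ((N : ℝ) - 1) * t N := by
    intro N hN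
    have h1 : ∑ n ∈ Finset.range N, t n = t 0 + ∑ n ∈ Finset.Ico 1 N, t n := by
      rw [Finset.range_eq_Ico, ← Finset.sum_Ico_consecutive _ (Nat.zero_le 1) hN]
      simp
    rw [h1]
    have h2 : ∀ n ∈ Finset.Ico 1 N, t n = (∑ k ∈ Finset.Ico n N, β k) + t N := by
      intro n hn
      rw [Finset.mem_Ico] at hn
      exact hkey n N (le_of_lt hn.2)
    rw [Finset.sum_congr rfl h2, Finset.sum_add_distrib, aux_double β N, Finset.sum_const,
      Nat.card_Ico, nsmul_eq_mul, Nat.cast_sub hN]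
    push_cast
    ring
  refine ⟨t 0 + l, ?_⟩
  have hE : Tendsto (fun N : ℕ => t 0 + S N + ((N:ℝ) * t N - t N)) atTop
      (nhds (t 0 + l + (0 - 0))) :=
    (tendsto_const_nhds.add hl).add (hNt.sub ht0)
  rw [sub_zero, add_zero] at hE
  apply hE.congr'
  filter_upwards [eventually_ge_atTop 1] with N hN
  rw [hps N hN]
  ring
end

section
/- Let (a_n)_{n≥0} be a sequence of real numbers with a_n ≥ 0, (a_n) nondecreasing and a_n → ∞, and let (W_n)_{n≥0} be a sequence of random variables converging almost surely to a random variable W. If the series Σ_n a_n·(W_{n+1} − W_n) converges almost surely, then a_n·(W − W_n) → 0 almost surely as n → ∞. -/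
open MeasureTheory Filter

private lemma telescope_Ico (f : ℕ → ℝ) (n m : ℕ) (hnm : n ≤ m) :
    ∑ k ∈ Finset.Ico n m, (f (k+1) - f k) = f m - f n := by
  induction m, hnm using Nat.le_induction with
  | base => simp
  | succ m hm ih => rw [Finset.sum_Ico_succ_top hm, ih]; ring

private lemma abel_identity (b c : ℕ → ℝ) (n m : ℕ) (hnm : n ≤ m) :
    ∑ k ∈ Finset.Ico n m, c k * b k
      = ∑ k ∈ Finset.Ico n m, ((c k - c (k+1)) * (∑ j ∈ Finset.Ico n (k+1), b j))
        + c m * ∑ j ∈ Finset.Ico n m, b j := by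
  induction m, hnm using Nat.le_induction with
  | base => simp
  | succ m hm ih =>
      rw [Finset.sum_Ico_succ_top hm, Finset.sum_Ico_succ_top hm, ih,
        Finset.sum_Ico_succ_top hm]
      ring

private lemma abel_bound_s13 (b c : ℕ → ℝ) (n m : ℕ) (hnm : n ≤ m) (E : ℝ)
    (hc0 : ∀ k, n ≤ k → 0 ≤ c (k+1)) (hcd : ∀ k, n ≤ k → c (k+1) ≤ c k)
    (hT : ∀ j, n ≤ j → j ≤ m → |∑ i ∈ Finset.Ico n j, b i| ≤ E) :
    |∑ k ∈ Finset.Ico n m, c k * b k| ≤ c n * E := by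
  have hE : 0 ≤ E := by
    have := hT n le_rfl hnm
    simpa using le_trans (abs_nonneg _) this
  have hcm : 0 ≤ c m := by
    rcases Nat.eq_or_lt_of_le hnm with h | h
    · subst h; exact le_trans (hc0 n le_rfl) (hcd n le_rfl)
    · obtain ⟨k, rfl⟩ := Nat.exists_eq_add_of_lt h
      exact hc0 _ (by omega)
  rw [abel_identity b c n m hnm]
  calc |∑ k ∈ Finset.Ico n m, ((c k - c (k+1)) * (∑ j ∈ Finset.Ico n (k+1), b j))
        + c m * ∑ j ∈ Finset.Ico n m, b j|
      ≤ |∑ k ∈ Finset.Ico n m, ((c k - c (k+1)) * (∑ j ∈ Finset.Ico n (k+1), b j))|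
        + |c m * ∑ j ∈ Finset.Ico n m, b j| := abs_add_le _ _
    _ ≤ (∑ k ∈ Finset.Ico n m, (c k - c (k+1)) * E) + c m * E := by
        gcongr
        · calc |∑ k ∈ Finset.Ico n m, ((c k - c (k+1)) * (∑ j ∈ Finset.Ico n (k+1), b j))|
              ≤ ∑ k ∈ Finset.Ico n m, |(c k - c (k+1)) * (∑ j ∈ Finset.Ico n (k+1), b j)| :=
                Finset.abs_sum_le_sum_abs _ _
            _ ≤ ∑ k ∈ Finset.Ico n m, (c k - c (k+1)) * E := by
                apply Finset.sum_le_sum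
                intro k hk
                rw [Finset.mem_Ico] at hk
                rw [abs_mul]
                have h1 : |c k - c (k+1)| = c k - c (k+1) := by
                  rw [abs_of_nonneg]; linarith [hcd k hk.1]
                rw [h1]
                exact mul_le_mul_of_nonneg_left (hT (k+1) (by omega) (by omega))
                  (by linarith [hcd k hk.1])
        · rw [abs_mul, abs_of_nonneg hcm]
          exact mul_le_mul_of_nonneg_left (hT m hnm le_rfl) hcm
    _ = (c n - c m) * E + c m * E := by
        congr 1
        rw [← Finset.sum_mul]
        congr 1
        have := telescope_Ico (fun k => -c k) n m hnm
        have h2 : ∑ k ∈ Finset.Ico n m, (c k - c (k+1))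
            = ∑ k ∈ Finset.Ico n m, (-c (k+1) - -c k) := by
          apply Finset.sum_congr rfl; intro k _; ring
        rw [h2, this]; ring
    _ = c n * E := by ring

private lemma key_det (a : ℕ → ℝ) (hmono : Monotone a) (hatop : Tendsto a atTop atTop)
    (w : ℕ → ℝ) (L : ℝ) (hw : Tendsto w atTop (nhds L)) (l : ℝ)
    (hs : Tendsto (fun N : ℕ => ∑ n ∈ Finset.range N, a n * (w (n + 1) - w n))
      atTop (nhds l)) :
    Tendsto (fun n : ℕ => a n * (L - w n)) atTop (nhds 0) := by
  rw [NormedAddCommGroup.tendsto_nhds_zero]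
  intro ε hε
  set S : ℕ → ℝ := fun N => ∑ n ∈ Finset.range N, a n * (w (n + 1) - w n) with hS
  have hcauchy : CauchySeq S := hs.cauchySeq
  obtain ⟨N₀, hN₀⟩ := Metric.cauchySeq_iff.mp hcauchy (ε/2) (by positivity)
  obtain ⟨N₁, hN₁⟩ := Filter.eventually_atTop.mp (hatop.eventually_gt_atTop 0)
  set N := max N₀ N₁ with hN
  rw [Filter.eventually_atTop]
  refine ⟨N, fun n hn => ?_⟩
  have han : 0 < a n := hN₁ n (le_trans (le_max_right _ _) hn)
  -- Step 1: for all m ≥ n, |a n * (w m - w n)| ≤ ε/2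
  have step1 : ∀ m, n ≤ m → |a n * (w m - w n)| ≤ ε/2 := by
    intro m hm
    have hak : ∀ k, n ≤ k → 0 < a k := fun k hk =>
      lt_of_lt_of_le han (hmono hk)
    have key : a n * (w m - w n)
        = ∑ k ∈ Finset.Ico n m, (a n / a k) * (a k * (w (k+1) - w k)) := by
      have : ∀ k ∈ Finset.Ico n m, (a n / a k) * (a k * (w (k+1) - w k))
          = a n * (w (k+1) - w k) := by
        intro k hk
        rw [Finset.mem_Ico] at hk
        field_simp [(hak k hk.1).ne']
      rw [Finset.sum_congr rfl this, ← Finset.mul_sum, telescope_Ico w n m hm]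
    rw [key]
    have hb : ∀ j, n ≤ j → j ≤ m →
        |∑ i ∈ Finset.Ico n j, a i * (w (i+1) - w i)| ≤ ε/2 := by
      intro j hj _
      have hjN₀ : N₀ ≤ j := le_trans (le_max_left _ _) (le_trans hn hj)
      have hnN₀ : N₀ ≤ n := le_trans (le_max_left _ _) hn
      have := hN₀ j hjN₀ n hnN₀
      rw [Real.dist_eq] at this
      have heq : ∑ i ∈ Finset.Ico n j, a i * (w (i+1) - w i) = S j - S n := by
        rw [hS]
        exact Finset.sum_Ico_eq_sub _ hj
      rw [heq]
      exact le_of_lt this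
    have := abel_bound_s13 (fun k => a k * (w (k+1) - w k)) (fun k => a n / a k) n m hm (ε/2)
      (fun k hk => le_of_lt (div_pos han (hak (k+1) (by omega))))
      (fun k hk => by
        apply div_le_div_of_nonneg_left (le_of_lt han) (hak k hk)
        exact hmono (Nat.le_succ k))
      hb
    calc |∑ k ∈ Finset.Ico n m, (a n / a k) * (a k * (w (k+1) - w k))| ≤ (a n / a n) * (ε/2) := this
      _ = ε/2 := by rw [div_self han.ne']; ring
  -- Step 2: take the limit m → ∞
  have hlim : Tendsto (fun m => |a n * (w m - w n)|) atTop (nhds |a n * (L - w n)|) :=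
    (((hw.sub_const (w n)).const_mul (a n)).abs)
  have hle : |a n * (L - w n)| ≤ ε/2 := by
    apply le_of_tendsto hlim
    rw [Filter.eventually_atTop]
    exact ⟨n, step1⟩
  calc ‖a n * (L - w n)‖ = |a n * (L - w n)| := rfl
    _ ≤ ε/2 := hle
    _ < ε := by linarith

/-- **Lemma 2.4 (Huang–Liu).** If `a_n ≥ 0`, `(a_n)` is nondecreasing with `a_n → ∞`,
`W_n → W` a.s., and the series `Σ_n a_n (W_{n+1} − W_n)` converges a.s., then
`a_n (W − W_n) → 0` a.s. -/
theorem rate_from_weighted_series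
    {Ω : Type*} [MeasurableSpace Ω] (μ : Measure Ω) [IsProbabilityMeasure μ]
    (a : ℕ → ℝ) (ha0 : ∀ n, 0 ≤ a n) (hmono : Monotone a) (hatop : Tendsto a atTop atTop)
    (W : ℕ → Ω → ℝ) (Wlim : Ω → ℝ)
    (hWmeas : ∀ n, Measurable (W n)) (hWlimmeas : Measurable Wlim)
    (hconv : ∀ᵐ ω ∂μ, Tendsto (fun n => W n ω) atTop (nhds (Wlim ω)))
    (hser : ∀ᵐ ω ∂μ, ∃ l : ℝ,
      Tendsto (fun N : ℕ => ∑ n ∈ Finset.range N, a n * (W (n + 1) ω - W n ω))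
        atTop (nhds l)) :
    ∀ᵐ ω ∂μ, Tendsto (fun n : ℕ => a n * (Wlim ω - W n ω)) atTop (nhds 0) := by
  filter_upwards [hconv, hser] with ω h1 h2
  obtain ⟨l, hl⟩ := h2
  exact key_det a hmono hatop (fun n => W n ω) (Wlim ω) h1 l hl
end

section
/- Let T be an ergodic measure-preserving transformation of a probability space (Ω, μ), and let α, β : Ω → [0,∞) be measurable functions (so that (α∘T^n, β∘T^n)_{n≥0} is a stationary ergodic sequence of pairs of nonnegative random variables). Assume 𝔼[(log α)⁺] < ∞ with 𝔼[log α] < 0 (the expectation possibly equal to −∞), and 𝔼[(log β)⁺] < ∞. Then Σ_{n=0}^∞ α(ω)·α(Tω)⋯α(T^{n−1}ω)·β(T^nω) < ∞ for μ-almost every ω. -/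
open MeasureTheory Filter
open scoped ENNReal

open scoped Topology

set_option linter.unusedSectionVars false
set_option linter.unusedVariables false

namespace ErgAux

variable {Ω : Type*} [MeasurableSpace Ω] {μ : Measure Ω} {T : Ω → Ω} {g : Ω → ℝ}

/-- running maximum of the Birkhoff sums `S_1, ..., S_{N+1}` -/
noncomputable def maxS (T : Ω → Ω) (g : Ω → ℝ) : ℕ → Ω → ℝ
  | 0 => g
  | (N+1) => fun ω => max (birkhoffSum T g (N+2) ω) (maxS T g N ω)

lemma le_maxS {n N : ℕ} (h : n ≤ N) (ω : Ω) :
    birkhoffSum T g (n+1) ω ≤ maxS T g N ω := by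
  induction N with
  | zero => simp at h; subst h; simp [maxS, birkhoffSum_one]
  | succ N ih =>
    rcases Nat.lt_or_ge n (N+1) with h' | h'
    · exact le_trans (ih (Nat.lt_succ_iff.mp h')) (le_max_right _ _)
    · have : n = N + 1 := le_antisymm h h'
      subst this
      exact le_max_left _ _

lemma maxS_eq (N : ℕ) (ω : Ω) : ∃ n ≤ N, maxS T g N ω = birkhoffSum T g (n+1) ω := by
  induction N with
  | zero => exact ⟨0, le_refl _, (birkhoffSum_one T g ω).symm⟩
  | succ N ih =>
    rcases ih with ⟨n, hn, heq⟩
    rcases le_total (birkhoffSum T g (N+2) ω) (maxS T g N ω) with h | h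
    · refine ⟨n, hn.trans (Nat.le_succ _), ?_⟩
      show max (birkhoffSum T g (N+2) ω) (maxS T g N ω) = _
      rw [max_eq_right h, heq]
    · refine ⟨N+1, le_refl _, ?_⟩
      show max (birkhoffSum T g (N+2) ω) (maxS T g N ω) = _
      rw [max_eq_left h]

lemma maxS_key (N : ℕ) (ω : Ω) :
    maxS T g N ω ≤ g ω + max (maxS T g N (T ω)) 0 := by
  rcases maxS_eq (T := T) (g := g) N ω with ⟨n, hn, heq⟩
  rw [heq, birkhoffSum_succ']
  gcongr
  cases n with
  | zero => simp [birkhoffSum_zero]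
  | succ m =>
    exact le_trans (le_maxS (le_trans (Nat.le_succ m) hn) (T ω)) (le_max_left _ _)

lemma maxS_mono {N M : ℕ} (h : N ≤ M) (ω : Ω) : maxS T g N ω ≤ maxS T g M ω := by
  induction M with
  | zero => simp at h; subst h; exact le_refl _
  | succ M ih =>
    rcases Nat.lt_or_ge N (M+1) with h' | h'
    · exact le_trans (ih (Nat.lt_succ_iff.mp h')) (le_max_right _ _)
    · have : N = M + 1 := le_antisymm h h'
      subst this; exact le_refl _

lemma measurable_maxS (hT : Measurable T) (hg : Measurable g) (N : ℕ) :
    Measurable (maxS T g N) := by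
  have hb : ∀ n, Measurable (birkhoffSum T g n) := fun n =>
    Finset.measurable_sum _ (fun k _ => hg.comp (hT.iterate k))
  induction N with
  | zero => exact hg
  | succ N ih => exact (hb (N+2)).max ih

lemma integrable_maxS (hT : MeasurePreserving T μ μ) (hg : Measurable g)
    (hgi : Integrable g μ) (N : ℕ) : Integrable (maxS T g N) μ := by
  have hb : ∀ n, Integrable (birkhoffSum T g n) μ := by
    intro n
    apply integrable_finset_sum
    intro k _
    exact ((hT.iterate k).integrable_comp hgi.aestronglyMeasurable).mpr hgi
  induction N with
  | zero => exact hgi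
  | succ N ih => exact (hb (N+2)).sup ih

/-- **Hopf's maximal ergodic theorem** (Garsia's proof). -/
theorem maximal_ergodic (hT : MeasurePreserving T μ μ) (hg : Measurable g)
    (hgi : Integrable g μ) :
    0 ≤ ∫ ω in {ω | ∃ n, 0 < birkhoffSum T g (n+1) ω}, g ω ∂μ := by
  set A : Set Ω := {ω | ∃ n, 0 < birkhoffSum T g (n+1) ω} with hA
  set E : ℕ → Set Ω := fun N => {ω | 0 < maxS T g N ω} with hE
  have hMm : ∀ N, Measurable (maxS T g N) := measurable_maxS hT.measurable hg
  have hMi : ∀ N, Integrable (maxS T g N) μ := integrable_maxS hT hg hgi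
  have hEm : ∀ N, MeasurableSet (E N) := fun N => measurableSet_lt measurable_const (hMm N)
  have hEmono : Monotone E := by
    intro N M h ω hω
    exact lt_of_lt_of_le hω (maxS_mono h ω)
  have hAeq : A = ⋃ N, E N := by
    ext ω
    constructor
    · rintro ⟨n, hn⟩
      exact Set.mem_iUnion.mpr ⟨n, lt_of_lt_of_le hn (le_maxS le_rfl ω)⟩
    · intro h
      rcases Set.mem_iUnion.mp h with ⟨N, hN⟩
      rcases maxS_eq (T := T) (g := g) N ω with ⟨n, _, heq⟩
      exact ⟨n, heq ▸ hN⟩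
  have hAm : MeasurableSet A := hAeq ▸ MeasurableSet.iUnion hEm
  -- key step: ∫_{E N} g ≥ 0
  have key : ∀ N, 0 ≤ ∫ ω in E N, g ω ∂μ := by
    intro N
    set M := maxS T g N with hMdef
    set Mp : Ω → ℝ := fun ω => max (M ω) 0 with hMp
    have hMpm : Measurable Mp := (hMm N).max measurable_const
    have hMpi : Integrable Mp μ := (hMi N).sup (integrable_zero _ _ _)
    have hMpTi : Integrable (fun ω => Mp (T ω)) μ :=
      (hT.integrable_comp hMpm.aestronglyMeasurable).mpr hMpi
    have hpos : Mp = Set.indicator (E N) M := by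
      ext ω
      by_cases h : ω ∈ E N
      · rw [Set.indicator_of_mem h]; exact max_eq_left (le_of_lt h)
      · rw [Set.indicator_of_notMem h]
        exact max_eq_right (le_of_not_gt h)
    -- ∫_{E N} g ≥ ∫_{E N} (M - (M∘T)⁺)
    have h1 : ∫ ω in E N, (M ω - Mp (T ω)) ∂μ ≤ ∫ ω in E N, g ω ∂μ := by
      apply setIntegral_mono_on
      · exact ((hMi N).sub hMpTi).integrableOn
      · exact hgi.integrableOn
      · exact hEm N
      · intro ω hω
        have := maxS_key (T := T) (g := g) N ω
        simp only [hMp]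
        linarith [this]
    have h2 : ∫ ω in E N, (M ω - Mp (T ω)) ∂μ
        = ∫ ω in E N, M ω ∂μ - ∫ ω in E N, Mp (T ω) ∂μ :=
      integral_sub (hMi N).integrableOn hMpTi.integrableOn
    have h3 : ∫ ω in E N, M ω ∂μ = ∫ ω, Mp ω ∂μ := by
      rw [hpos, integral_indicator (hEm N)]
    have h4 : ∫ ω in E N, Mp (T ω) ∂μ ≤ ∫ ω, Mp (T ω) ∂μ :=
      setIntegral_le_integral hMpTi (Filter.Eventually.of_forall (fun ω => le_max_right _ _))
    have h5 : ∫ ω, Mp (T ω) ∂μ = ∫ ω, Mp ω ∂μ := by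
      have hsm : AEStronglyMeasurable Mp (Measure.map T μ) := by
        rw [hT.map_eq]; exact hMpm.aestronglyMeasurable
      rw [← integral_map hT.measurable.aemeasurable hsm, hT.map_eq]
    linarith
  -- pass to the limit
  have hlim : Tendsto (fun N => ∫ ω in E N, g ω ∂μ) atTop (𝓝 (∫ ω in A, g ω ∂μ)) := by
    rw [hAeq]
    exact tendsto_setIntegral_of_monotone hEm hEmono hgi.integrableOn
  exact ge_of_tendsto' hlim key

end ErgAux

namespace ErgAux2
open ErgAux

variable {Ω : Type*} [MeasurableSpace Ω] {μ : MeasureTheory.Measure Ω} {T : Ω → Ω} {f : Ω → ℝ}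

theorem ae_exists_birkhoff_le [IsProbabilityMeasure μ] (hT : Ergodic T μ)
    (hf : Measurable f) (hfi : Integrable f μ) {lam : ℝ} (hlam : ∫ ω, f ω ∂μ < lam) :
    ∀ᵐ ω ∂μ, ∃ m, ∀ n : ℕ, birkhoffSum T f n (T^[m] ω) ≤ lam * n := by
  set g : Ω → ℝ := fun ω => f ω - lam with hg
  have hgm : Measurable g := hf.sub measurable_const
  have hgi : Integrable g μ := hfi.sub (integrable_const lam)
  have hgint : ∫ ω, g ω ∂μ < 0 := by
    rw [hg]
    rw [integral_sub hfi (integrable_const lam), integral_const]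
    simp only [probReal_univ, one_smul]
    linarith
  have hSg : ∀ n ω, birkhoffSum T g n ω = birkhoffSum T f n ω - lam * n := by
    intro n ω
    simp only [birkhoffSum, hg, Finset.sum_sub_distrib, Finset.sum_const, Finset.card_range,
      nsmul_eq_mul, mul_comm]
  set A : Set Ω := {ω | ∃ n, 0 < birkhoffSum T g (n+1) ω} with hA
  have hbm : ∀ n, Measurable (birkhoffSum T g n) := fun n =>
    Finset.measurable_sum _ (fun k _ => hgm.comp (hT.measurable.iterate k))
  have hAm : MeasurableSet A := by
    have : A = ⋃ n, {ω | 0 < birkhoffSum T g (n+1) ω} := by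
      ext ω; simp [hA, Set.mem_iUnion]
    rw [this]
    exact MeasurableSet.iUnion fun n => measurableSet_lt measurable_const (hbm (n+1))
  set C : Set Ω := ⋂ m, T^[m] ⁻¹' A with hC
  have hCm : MeasurableSet C :=
    MeasurableSet.iInter fun m => (hT.measurable.iterate m) hAm
  have hsub : C ⊆ T ⁻¹' C := by
    intro ω hω
    simp only [hC, Set.mem_iInter, Set.mem_preimage] at hω ⊢
    intro m
    have := hω (m+1)
    rwa [Function.iterate_succ, Function.comp_apply] at this
  rcases hT.ae_empty_or_univ_of_ae_le_preimage hCm.nullMeasurableSet hsub.eventuallyLE with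
    h | h
  · -- C is a.e. empty: done
    have := Filter.eventuallyEq_empty.mp h
    filter_upwards [this] with ω hω
    simp only [hC, Set.mem_iInter, Set.mem_preimage, not_forall] at hω
    obtain ⟨m, hm⟩ := hω
    refine ⟨m, fun n => ?_⟩
    cases n with
    | zero => simp [birkhoffSum_zero]
    | succ k =>
      have hk : ¬ 0 < birkhoffSum T g (k+1) (T^[m] ω) := by
        simp only [hA, Set.mem_setOf_eq, not_exists] at hm
        exact hm k
      push_neg at hk
      have := hSg (k+1) (T^[m] ω)
      rw [this] at hk
      linarith
  · -- C is a.e. univ: contradiction with the maximal ergodic theorem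
    exfalso
    have hae : ∀ᵐ ω ∂μ, ω ∈ A := by
      filter_upwards [Filter.eventuallyEq_univ.mp h] with ω hω
      have : ω ∈ C := hω
      simpa using (Set.mem_iInter.mp this 0)
    have hrestrict : μ.restrict A = μ := Measure.restrict_eq_self_of_ae_mem hae
    have h0 : (0:ℝ) ≤ ∫ ω in A, g ω ∂μ :=
      maximal_ergodic hT.toMeasurePreserving hgm hgi
    rw [hrestrict] at h0
    linarith

end ErgAux2

namespace ErgAux3

variable {Ω : Type*} [MeasurableSpace Ω] {μ : MeasureTheory.Measure Ω} {T : Ω → Ω}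

lemma tsum_meas_le (G : Ω → ℝ≥0∞) (hG : Measurable G) (ε : ℝ≥0∞) :
    ε * ∑' n : ℕ, μ {ω | ε * ((n : ℝ≥0∞) + 1) ≤ G ω} ≤ ∫⁻ ω, G ω ∂μ := by
  set s : ℕ → Set Ω := fun n => {ω | ε * ((n : ℝ≥0∞) + 1) ≤ G ω} with hs
  have hsm : ∀ n, MeasurableSet (s n) := fun n => measurableSet_le measurable_const hG
  calc ε * ∑' n : ℕ, μ (s n) = ∑' n : ℕ, ε * μ (s n) := ENNReal.tsum_mul_left.symm
    _ = ∑' n : ℕ, ∫⁻ ω, (s n).indicator (fun _ => ε) ω ∂μ := by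
        congr 1; ext n; rw [lintegral_indicator_const (hsm n)]
    _ = ∫⁻ ω, ∑' n : ℕ, (s n).indicator (fun _ => ε) ω ∂μ := by
        rw [lintegral_tsum]
        intro n
        exact (measurable_const.indicator (hsm n)).aemeasurable
    _ ≤ ∫⁻ ω, G ω ∂μ := by
        apply lintegral_mono
        intro ω
        apply Summable.tsum_le_of_sum_le ENNReal.summable
        intro t
        set t' : Finset ℕ := t.filter (fun n => ε * ((n : ℝ≥0∞) + 1) ≤ G ω) with ht'
        have hsum : ∑ n ∈ t, (s n).indicator (fun _ => ε) ω = t'.card * ε := by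
          rw [Finset.sum_indicator_eq_sum_filter]
          simp only [Finset.sum_const, nsmul_eq_mul]
          congr 1
        rw [hsum]
        rcases Finset.eq_empty_or_nonempty t' with h | h
        · simp [h]
        · set m := t'.max' h with hm
          have hmem : ε * ((m : ℝ≥0∞) + 1) ≤ G ω :=
            (Finset.mem_filter.mp (t'.max'_mem h)).2
          have hcard : t'.card ≤ m + 1 := by
            have : t' ⊆ Finset.range (m+1) := by
              intro x hx
              exact Finset.mem_range.mpr (Nat.lt_succ_of_le (t'.le_max' x hx))
            simpa using Finset.card_le_card this
          calc (t'.card : ℝ≥0∞) * ε ≤ ((m : ℝ≥0∞) + 1) * ε := by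
                gcongr
                exact_mod_cast hcard
            _ = ε * ((m : ℝ≥0∞) + 1) := mul_comm _ _
            _ ≤ G ω := hmem

lemma ae_eventually_beta_le [IsProbabilityMeasure μ] (hT : MeasurePreserving T μ μ)
    {β : Ω → ℝ} (hβ : Measurable β)
    (hβp : ∫⁻ ω, ENNReal.ofReal (Real.log (β ω)) ∂μ < ⊤) {ε : ℝ} (hε : 0 < ε) :
    ∀ᵐ ω ∂μ, ∀ᶠ n in atTop, β (T^[n] ω) ≤ Real.exp (ε * n) := by
  set G : Ω → ℝ≥0∞ := fun ω => ENNReal.ofReal (Real.log (β ω)) with hG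
  have hGm : Measurable G := (Real.measurable_log.comp hβ).ennreal_ofReal
  set B : ℕ → Set Ω := fun n => {ω | Real.exp (ε * n) < β ω} with hB
  have hBm : ∀ n, MeasurableSet (B n) := fun n => measurableSet_lt measurable_const hβ
  set s : ℕ → Set Ω := fun n => T^[n] ⁻¹' B n with hss
  have hsmeas : ∀ n, μ (s n) = μ (B n) := fun n =>
    (hT.iterate n).measure_preimage (hBm n).nullMeasurableSet
  have hsub : ∀ n : ℕ, B (n+1) ⊆ {ω | ENNReal.ofReal ε * ((n : ℝ≥0∞) + 1) ≤ G ω} := by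
    intro n ω hω
    simp only [hB, Set.mem_setOf_eq] at hω
    have hβpos : 0 < β ω := lt_trans (Real.exp_pos _) hω
    have hlog : ε * (n+1 : ℕ) < Real.log (β ω) := (Real.lt_log_iff_exp_lt hβpos).mpr hω
    have : ENNReal.ofReal (ε * ((n:ℝ)+1)) ≤ G ω := by
      apply ENNReal.ofReal_le_ofReal
      push_cast at hlog ⊢
      linarith
    calc ENNReal.ofReal ε * ((n : ℝ≥0∞) + 1)
        = ENNReal.ofReal (ε * ((n:ℝ)+1)) := by
          rw [ENNReal.ofReal_mul hε.le]
          congr 1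
          rw [ENNReal.ofReal_add (by positivity) zero_le_one]
          simp [ENNReal.ofReal_natCast]
      _ ≤ G ω := this
  have htail : ∑' n : ℕ, μ (s (n+1)) ≠ ⊤ := by
    have h1 : ∑' n : ℕ, μ (s (n+1)) ≤
        ∑' n : ℕ, μ {ω | ENNReal.ofReal ε * ((n : ℝ≥0∞) + 1) ≤ G ω} := by
      apply ENNReal.tsum_le_tsum
      intro n
      rw [hsmeas (n+1)]
      exact measure_mono (hsub n)
    have h2 : ENNReal.ofReal ε * ∑' n : ℕ, μ {ω | ENNReal.ofReal ε * ((n : ℝ≥0∞) + 1) ≤ G ω}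
        ≤ ∫⁻ ω, G ω ∂μ := tsum_meas_le G hGm _
    have hεne : ENNReal.ofReal ε ≠ 0 := by simp [hε]
    intro hcon
    rw [hcon] at h1
    have htop : ∑' n : ℕ, μ {ω | ENNReal.ofReal ε * ((n : ℝ≥0∞) + 1) ≤ G ω} = ⊤ :=
      top_le_iff.mp h1
    rw [htop, ENNReal.mul_top hεne, top_le_iff] at h2
    exact hβp.ne h2
  filter_upwards [MeasureTheory.ae_eventually_notMem htail] with ω hω
  rw [Filter.eventually_atTop] at hω ⊢
  obtain ⟨N, hN⟩ := hω
  refine ⟨N + 1, fun n hn => ?_⟩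
  obtain ⟨k, rfl⟩ : ∃ k, n = k + 1 := ⟨n - 1, by omega⟩
  have := hN k (by omega)
  simp only [hss, Set.mem_preimage, hB, Set.mem_setOf_eq, not_lt] at this
  exact this

end ErgAux3

namespace ErgAux4

variable {Ω : Type*} [MeasurableSpace Ω] {μ : MeasureTheory.Measure Ω}

lemma exists_trunc [IsProbabilityMeasure μ] {α : Ω → ℝ} (hαmeas : Measurable α)
    (hα0 : ∀ ω, 0 ≤ α ω)
    (hαplus : ∫⁻ ω, ENNReal.ofReal (Real.log (α ω)) ∂μ < ⊤)
    (hαneg : μ {ω | α ω = 0} ≠ 0 ∨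
      ∫⁻ ω, ENNReal.ofReal (Real.log (α ω)) ∂μ <
        ∫⁻ ω, ENNReal.ofReal (-Real.log (α ω)) ∂μ) :
    ∃ f : Ω → ℝ, Measurable f ∧ Integrable f μ ∧ (∀ ω, α ω ≤ Real.exp (f ω)) ∧
      ∫ ω, f ω ∂μ < 0 := by
  set P := ∫⁻ ω, ENNReal.ofReal (Real.log (α ω)) ∂μ with hP
  have hZm : MeasurableSet {ω | α ω = 0} := hαmeas (measurableSet_singleton 0)
  -- generic facts for a truncation level M > 0
  have main : ∀ M : ℝ, 0 < M →
      (∫⁻ ω, ENNReal.ofReal (-(if α ω = 0 then -M else max (Real.log (α ω)) (-M))) ∂μ) > P →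
      ∃ f : Ω → ℝ, Measurable f ∧ Integrable f μ ∧ (∀ ω, α ω ≤ Real.exp (f ω)) ∧
        ∫ ω, f ω ∂μ < 0 := by
    intro M hM hNp
    set f : Ω → ℝ := fun ω => if α ω = 0 then -M else max (Real.log (α ω)) (-M) with hf
    have hfm : Measurable f :=
      Measurable.ite hZm measurable_const ((Real.measurable_log.comp hαmeas).max measurable_const)
    have hplus_int : Integrable (fun ω => max (Real.log (α ω)) 0) μ := by
      refine ⟨((Real.measurable_log.comp hαmeas).max measurable_const).aestronglyMeasurable, ?_⟩
      rw [hasFiniteIntegral_iff_norm]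
      have : ∀ ω, ENNReal.ofReal ‖max (Real.log (α ω)) 0‖ =
          ENNReal.ofReal (Real.log (α ω)) := by
        intro ω
        rw [Real.norm_of_nonneg (le_max_right _ _)]
        rcases le_total (Real.log (α ω)) 0 with h | h
        · rw [max_eq_right h, ENNReal.ofReal_zero, ENNReal.ofReal_of_nonpos h]
        · rw [max_eq_left h]
      simp only [this]
      exact hαplus
    have hbound : ∀ ω, ‖f ω‖ ≤ M + max (Real.log (α ω)) 0 := by
      intro ω
      rw [Real.norm_eq_abs, abs_le]
      constructor
      · by_cases h : α ω = 0
        · simp only [hf, if_pos h]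
          have := le_max_right (Real.log (α ω)) 0
          linarith
        · simp only [hf, if_neg h]
          have h1 : -M ≤ max (Real.log (α ω)) (-M) := le_max_right _ _
          have := le_max_right (Real.log (α ω)) 0
          linarith
      · by_cases h : α ω = 0
        · simp only [hf, if_pos h]
          have := le_max_right (Real.log (α ω)) 0
          linarith
        · simp only [hf, if_neg h]
          have h1 : max (Real.log (α ω)) (-M) ≤ max (Real.log (α ω)) 0 :=
            max_le_max le_rfl (by linarith)
          have := le_max_right (Real.log (α ω)) 0
          linarith

    have hfi : Integrable f μ := by
      refine Integrable.mono' ((integrable_const M).add hplus_int) hfm.aestronglyMeasurable ?_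
      exact Filter.Eventually.of_forall hbound
    have hexp : ∀ ω, α ω ≤ Real.exp (f ω) := by
      intro ω
      by_cases h : α ω = 0
      · rw [h]; exact (Real.exp_pos _).le
      · have hpos : 0 < α ω := lt_of_le_of_ne (hα0 ω) (Ne.symm h)
        simp only [hf, if_neg h]
        calc α ω = Real.exp (Real.log (α ω)) := (Real.exp_log hpos).symm
          _ ≤ Real.exp (max (Real.log (α ω)) (-M)) :=
            Real.exp_le_exp.mpr (le_max_left _ _)
    -- positive and negative parts
    have hPp : ∫⁻ ω, ENNReal.ofReal (f ω) ∂μ ≤ P := by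
      apply lintegral_mono
      intro ω
      by_cases h : α ω = 0
      · simp only [hf, if_pos h]
        rw [ENNReal.ofReal_of_nonpos (by linarith)]
        exact zero_le
      · simp only [hf, if_neg h]
        rcases le_total (Real.log (α ω)) (-M) with h' | h'
        · rw [max_eq_right h', ENNReal.ofReal_of_nonpos (by linarith)]
          exact zero_le
        · rw [max_eq_left h']
    have hNtop : ∫⁻ ω, ENNReal.ofReal (-(f ω)) ∂μ < ⊤ := by
      have : ∀ ω, ENNReal.ofReal (-(f ω)) ≤ ENNReal.ofReal M := by
        intro ω
        apply ENNReal.ofReal_le_ofReal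
        by_cases h : α ω = 0
        · simp [hf, h]
        · simp only [hf, if_neg h]
          have := le_max_right (Real.log (α ω)) (-M)
          linarith
      calc ∫⁻ ω, ENNReal.ofReal (-(f ω)) ∂μ ≤ ∫⁻ _, ENNReal.ofReal M ∂μ := lintegral_mono this
        _ = ENNReal.ofReal M := by simp
        _ < ⊤ := ENNReal.ofReal_lt_top
    have hint : ∫ ω, f ω ∂μ < 0 := by
      rw [integral_eq_lintegral_pos_part_sub_lintegral_neg_part hfi]
      have h1 : (∫⁻ ω, ENNReal.ofReal (f ω) ∂μ).toReal <
          (∫⁻ ω, ENNReal.ofReal (-(f ω)) ∂μ).toReal := by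
        apply ENNReal.toReal_lt_toReal (lt_of_le_of_lt hPp hαplus).ne hNtop.ne |>.mpr
        exact lt_of_le_of_lt hPp hNp
      linarith
    exact ⟨f, hfm, hfi, hexp, hint⟩
  rcases hαneg with hδ | hPN
  · -- case 1: α vanishes with positive probability
    set δ := μ {ω | α ω = 0} with hδdef
    have hδfin : δ ≠ ⊤ := (measure_lt_top μ _).ne
    have hPδfin : P / δ ≠ ⊤ := by
      intro h
      rw [ENNReal.div_eq_top] at h
      rcases h with ⟨-, h0⟩ | ⟨hPt, -⟩
      · exact hδ h0
      · exact hαplus.ne hPt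
    set M := (P / δ).toReal + 1 with hMdef
    have hM : 0 < M := by positivity
    apply main M hM
    -- negative part ≥ ofReal M * δ > P
    have hge : ∫⁻ ω, ENNReal.ofReal
        (-(if α ω = 0 then -M else max (Real.log (α ω)) (-M))) ∂μ ≥ ENNReal.ofReal M * δ := by
      rw [hδdef, ← lintegral_indicator_const hZm (ENNReal.ofReal M)]
      apply lintegral_mono
      intro ω
      by_cases h : α ω = 0
      · rw [Set.indicator_of_mem (show ω ∈ {ω' | α ω' = 0} from h)]
        simp only [if_pos h, neg_neg, le_refl]
      · rw [Set.indicator_of_notMem (show ω ∉ {ω' | α ω' = 0} from h)]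
        exact zero_le
    have hlt : P < ENNReal.ofReal M * δ := by
      have h1 : P / δ < ENNReal.ofReal M := by
        rw [hMdef, ENNReal.ofReal_add ENNReal.toReal_nonneg zero_le_one,
          ENNReal.ofReal_toReal hPδfin, ENNReal.ofReal_one]
        exact ENNReal.lt_add_right hPδfin one_ne_zero
      calc P = P / δ * δ := (ENNReal.div_mul_cancel hδ hδfin).symm
        _ < ENNReal.ofReal M * δ := by
          rw [mul_comm _ δ, mul_comm _ δ]; exact ENNReal.mul_lt_mul_right hδ hδfin h1
    exact lt_of_lt_of_le hlt hge
  · -- case 2: positive part < negative part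
    set G : Ω → ℝ≥0∞ := fun ω => ENNReal.ofReal (-Real.log (α ω)) with hG
    have hGm : Measurable G := (Real.measurable_log.comp hαmeas).neg.ennreal_ofReal
    have hMCT : ∫⁻ ω, G ω ∂μ = ⨆ k : ℕ, ∫⁻ ω, min (G ω) k ∂μ := by
      rw [← lintegral_iSup (fun k => hGm.min measurable_const)]
      · congr 1
        ext ω
        apply le_antisymm
        · obtain ⟨k, hk⟩ := ENNReal.exists_nat_gt (show G ω ≠ ⊤ from ENNReal.ofReal_ne_top)
          refine le_trans ?_ (le_iSup _ k)
          rw [min_eq_left hk.le]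
        · exact iSup_le fun k => min_le_left _ _
      · intro i j hij ω
        exact min_le_min le_rfl (by exact_mod_cast Nat.cast_le.mpr hij)
    have hex : ∃ k : ℕ, P < ∫⁻ ω, min (G ω) k ∂μ := by
      rw [hMCT] at hPN
      exact lt_iSup_iff.mp hPN
    obtain ⟨k, hk⟩ := hex
    set M := (k : ℝ) + 1 with hMdef
    have hM : 0 < M := by positivity
    apply main M hM
    refine lt_of_lt_of_le hk (lintegral_mono fun ω => ?_)
    have hMk : (k : ℝ≥0∞) ≤ ENNReal.ofReal M := by
      rw [hMdef]
      rw [ENNReal.ofReal_add (Nat.cast_nonneg k) zero_le_one, ENNReal.ofReal_natCast,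
        ENNReal.ofReal_one]
      exact le_self_add
    by_cases h : α ω = 0
    · rw [if_pos h, neg_neg]
      exact le_trans (min_le_right _ _) hMk
    · rw [if_neg h]
      have : -(max (Real.log (α ω)) (-M)) = min (-Real.log (α ω)) M := by
        rw [← min_neg_neg, neg_neg]
      rw [this]
      have : ENNReal.ofReal (min (-Real.log (α ω)) M) =
          min (ENNReal.ofReal (-Real.log (α ω))) (ENNReal.ofReal M) := by
        rcases le_total (-Real.log (α ω)) M with h' | h'
        · rw [min_eq_left h', min_eq_left (ENNReal.ofReal_le_ofReal h')]
        · rw [min_eq_right h', min_eq_right (ENNReal.ofReal_le_ofReal h')]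
      rw [this]
      exact min_le_min le_rfl hMk

end ErgAux4


set_option maxHeartbeats 1600000 in
/-- **Lemma 3.1 (after Grincevičius / Tanny).** Let `T` be an ergodic measure-preserving
transformation of a probability space `(Ω, μ)` and `α, β : Ω → [0, ∞)` measurable.
If `𝔼 (log α)⁺ < ∞`, `𝔼 log α < 0` (possibly `−∞`, which happens in particular when
`μ(α = 0) > 0`), and `𝔼 (log β)⁺ < ∞`, then
`Σ_n α(ω) α(Tω) ⋯ α(T^{n-1}ω) β(T^n ω) < ∞` for a.e. `ω`.
(The condition `𝔼 log α < 0` is expressed as: either `α` vanishes on a set of positive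
measure, or the positive part of `∫ log α` is smaller than the negative part.) -/
theorem ergodic_weighted_series_summable
    {Ω : Type*} [MeasurableSpace Ω] (μ : Measure Ω) [IsProbabilityMeasure μ]
    (T : Ω → Ω) (hT : Ergodic T μ)
    (α β : Ω → ℝ) (hαmeas : Measurable α) (hβmeas : Measurable β)
    (hα0 : ∀ ω, 0 ≤ α ω) (hβ0 : ∀ ω, 0 ≤ β ω)
    (hαplus : ∫⁻ ω, ENNReal.ofReal (Real.log (α ω)) ∂μ < ⊤)
    (hαneg : μ {ω | α ω = 0} ≠ 0 ∨
      ∫⁻ ω, ENNReal.ofReal (Real.log (α ω)) ∂μ <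
        ∫⁻ ω, ENNReal.ofReal (-Real.log (α ω)) ∂μ)
    (hβplus : ∫⁻ ω, ENNReal.ofReal (Real.log (β ω)) ∂μ < ⊤) :
    ∀ᵐ ω ∂μ,
      Summable (fun n : ℕ => (∏ k ∈ Finset.range n, α (T^[k] ω)) * β (T^[n] ω)) := by
  obtain ⟨f, hfm, hfi, hexp, hint⟩ := ErgAux4.exists_trunc hαmeas hα0 hαplus hαneg
  set lam := (∫ ω, f ω ∂μ) / 2 with hlam
  have hlamneg : lam < 0 := by rw [hlam]; linarith
  have hflam : ∫ ω, f ω ∂μ < lam := by rw [hlam]; linarith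
  have hε : (0:ℝ) < -lam/2 := by linarith
  have h1 := ErgAux2.ae_exists_birkhoff_le hT hfm hfi hflam
  have h2 := ErgAux3.ae_eventually_beta_le hT.toMeasurePreserving hβmeas hβplus hε
  filter_upwards [h1, h2] with ω hω1 hω2
  obtain ⟨m, hm⟩ := hω1
  rw [Filter.eventually_atTop] at hω2
  obtain ⟨N₀, hN₀⟩ := hω2
  set r := Real.exp (lam/2) with hr
  have hr0 : 0 ≤ r := Real.exp_nonneg _
  have hr1 : r < 1 := by rw [hr]; apply Real.exp_lt_one_iff.mpr; linarith
  set c₀ := birkhoffSum T f m ω - lam * m with hc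
  set N := max m N₀ with hN
  have key : ∀ n : ℕ, (∏ k ∈ Finset.range (n+N), α (T^[k] ω)) * β (T^[n+N] ω)
      ≤ Real.exp c₀ * r ^ (n+N) := by
    intro n
    have hmn : m ≤ n + N := le_trans (le_max_left _ _) (Nat.le_add_left _ _)
    have hN0n : N₀ ≤ n + N := le_trans (le_max_right _ _) (Nat.le_add_left _ _)
    have hbs : birkhoffSum T f (n+N) ω ≤ c₀ + lam * ((n+N : ℕ) : ℝ) := by
      have hsplit := birkhoffSum_add T f m ((n+N) - m) ω
      rw [Nat.add_sub_cancel' hmn] at hsplit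
      have hb := hm ((n+N) - m)
      have hcast : (((n+N) - m : ℕ) : ℝ) = ((n+N : ℕ) : ℝ) - (m : ℝ) := by
        rw [Nat.cast_sub hmn]
      rw [hcast] at hb
      rw [hsplit, hc]
      linarith
    have hprod : (∏ k ∈ Finset.range (n+N), α (T^[k] ω))
        ≤ Real.exp (birkhoffSum T f (n+N) ω) := by
      rw [birkhoffSum, Real.exp_sum]
      exact Finset.prod_le_prod (fun k _ => hα0 _) (fun k _ => hexp _)
    have hβb : β (T^[n+N] ω) ≤ Real.exp ((-lam/2) * ((n+N : ℕ) : ℝ)) := hN₀ _ hN0n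
    calc (∏ k ∈ Finset.range (n+N), α (T^[k] ω)) * β (T^[n+N] ω)
        ≤ Real.exp (birkhoffSum T f (n+N) ω) * Real.exp ((-lam/2) * ((n+N : ℕ) : ℝ)) :=
          mul_le_mul hprod hβb (hβ0 _) (Real.exp_nonneg _)
      _ ≤ Real.exp (c₀ + lam * ((n+N : ℕ) : ℝ)) * Real.exp ((-lam/2) * ((n+N : ℕ) : ℝ)) := by
          apply mul_le_mul_of_nonneg_right (Real.exp_le_exp.mpr hbs) (Real.exp_nonneg _)
      _ = Real.exp c₀ * r ^ (n+N) := by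
          rw [hr, ← Real.exp_nat_mul, ← Real.exp_add, ← Real.exp_add]
          congr 1
          ring
  have hgeo : Summable (fun n : ℕ => Real.exp c₀ * r ^ (n+N)) :=
    (summable_nat_add_iff N).mpr ((summable_geometric_of_lt_one hr0 hr1).mul_left (Real.exp c₀))
  have htail : Summable (fun n : ℕ =>
      (∏ k ∈ Finset.range (n+N), α (T^[k] ω)) * β (T^[n+N] ω)) :=
    Summable.of_nonneg_of_le
      (fun n => mul_nonneg (Finset.prod_nonneg fun k _ => hα0 _) (hβ0 _)) key hgeo
  exact (summable_nat_add_iff N).mp htail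
end

section
/- Let (Z_n) be a branching process in a varying environment with P_n = m_0⋯m_{n−1} and W_n = Z_n/P_n, and assume m_k(2) = Σ_i i²·p_i(k) < ∞ for all k. Then for every n ≥ 1, 𝔼 W_n² = 1 + Σ_{k=0}^{n−1} (1/P_k)·(m_k(2)/m_k² − 1); consequently, the martingale (W_n) is bounded in L² if and only if the series Σ_{k=0}^∞ (1/P_k)·(m_k(2)/m_k² − 1) converges. -/
open MeasureTheory ProbabilityTheory Filter
open scoped ENNReal NNReal

noncomputable section

/-- A branching process in a varying environment: for each `n`, `p n` is an offspring
distribution on `ℕ` with finite positive mean; the offspring variables `X n i`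
(`n ≥ 0`, `i ≥ 0`) are independent, `X n i` having distribution `p n`; and
`Z 0 = 1`, `Z (n+1) = Σ_{i < Z n} X n i`. -/
structure BPVE (Ω : Type*) [MeasurableSpace Ω] where
  μ : Measure Ω
  prob : IsProbabilityMeasure μ
  p : ℕ → ℕ → ℝ
  p_nonneg : ∀ n i, 0 ≤ p n i
  p_sum : ∀ n, HasSum (p n) 1
  mean_summable : ∀ n, Summable fun i : ℕ => (i : ℝ) * p n i
  mean_pos : ∀ n, 0 < ∑' i : ℕ, (i : ℝ) * p n i
  X : ℕ → ℕ → Ω → ℕ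
  X_meas : ∀ n i, Measurable (X n i)
  X_indep : iIndepFun (fun q : ℕ × ℕ => X q.1 q.2) μ
  X_dist : ∀ n i k, (μ {ω | X n i ω = k}).toReal = p n k
  Z : ℕ → Ω → ℕ
  Z_zero : ∀ ω, Z 0 ω = 1
  Z_succ : ∀ n ω, Z (n + 1) ω = ∑ i ∈ Finset.range (Z n ω), X n i ω

namespace BPVE

variable {Ω : Type*} [MeasurableSpace Ω]

/-- The mean `m_n` of the `n`-th offspring distribution. -/
def m (b : BPVE Ω) (n : ℕ) : ℝ := ∑' i : ℕ, (i : ℝ) * b.p n i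

/-- `P_n = m_0 ⋯ m_{n-1}`. -/
def P (b : BPVE Ω) (n : ℕ) : ℝ := ∏ k ∈ Finset.range n, b.m k

/-- The normalized population size `W_n = Z_n / P_n`. -/
def W (b : BPVE Ω) (n : ℕ) (ω : Ω) : ℝ := (b.Z n ω : ℝ) / b.P n

/-- The moment `m_n(r) = Σ_i i^r p_i(n)`, computed in `[0, ∞]` so that it is
meaningful even when infinite. -/
def mom (b : BPVE Ω) (n : ℕ) (r : ℝ) : ℝ≥0∞ :=
  ∑' i : ℕ, (i : ℝ≥0∞) ^ r * ENNReal.ofReal (b.p n i)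

end BPVE

/-- `log⁺ x = max (log x) 0`. -/
def logPlus (x : ℝ) : ℝ := max (Real.log x) 0

end

noncomputable section

namespace BPVE

variable {Ω : Type*} [MeasurableSpace Ω] (b : BPVE Ω)

/-- second moment of the offspring law -/
def v (n : ℕ) : ℝ := ∑' i : ℕ, (i : ℝ) ^ 2 * b.p n i

/-- the second moment of `Z n` -/
def A (n : ℕ) : ℝ :=
  b.P n ^ 2 * (1 + ∑ k ∈ Finset.range n, (1 / b.P k) * (b.v k / b.m k ^ 2 - 1))

lemma m_pos (n : ℕ) : 0 < b.m n := b.mean_pos n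

lemma P_pos (n : ℕ) : 0 < b.P n := Finset.prod_pos fun k _ => b.m_pos k

lemma measX (n i k : ℕ) : b.μ {ω | b.X n i ω = k} = ENNReal.ofReal (b.p n k) := by
  haveI := b.prob
  rw [← b.X_dist n i k, ENNReal.ofReal_toReal (measure_ne_top _ _)]

lemma lint_comp {Y : Ω → ℕ} (hY : Measurable Y) (g : ℕ → ℝ≥0∞) :
    ∫⁻ ω, g (Y ω) ∂b.μ = ∑' k, g k * b.μ {ω | Y ω = k} := by
  rw [← lintegral_map measurable_from_top hY, lintegral_countable']
  refine tsum_congr fun k => ?_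
  rw [Measure.map_apply hY (measurableSet_singleton k)]
  rfl

lemma tsum1 (n : ℕ) :
    ∑' k : ℕ, (k : ℝ≥0∞) * ENNReal.ofReal (b.p n k) = ENNReal.ofReal (b.m n) := by
  rw [m, ENNReal.ofReal_tsum_of_nonneg
    (fun k => mul_nonneg (Nat.cast_nonneg k) (b.p_nonneg n k)) (b.mean_summable n)]
  exact (tsum_congr fun k => by
    rw [ENNReal.ofReal_mul (Nat.cast_nonneg k), ENNReal.ofReal_natCast]).symm

lemma tsum2 (n : ℕ) (h2 : Summable fun i : ℕ => (i : ℝ) ^ 2 * b.p n i) :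
    ∑' k : ℕ, (k : ℝ≥0∞) ^ 2 * ENNReal.ofReal (b.p n k) = ENNReal.ofReal (b.v n) := by
  rw [v, ENNReal.ofReal_tsum_of_nonneg
    (fun k => mul_nonneg (sq_nonneg _) (b.p_nonneg n k)) h2]
  refine (tsum_congr fun k => ?_).symm
  rw [ENNReal.ofReal_mul (sq_nonneg _), ENNReal.ofReal_pow (Nat.cast_nonneg k),
    ENNReal.ofReal_natCast]

lemma lintX (n i : ℕ) : ∫⁻ ω, (b.X n i ω : ℝ≥0∞) ∂b.μ = ENNReal.ofReal (b.m n) := by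
  rw [b.lint_comp (b.X_meas n i) (fun k => (k : ℝ≥0∞))]
  simp_rw [b.measX]
  exact b.tsum1 n

lemma lintX2 (n i : ℕ) (h2 : Summable fun i : ℕ => (i : ℝ) ^ 2 * b.p n i) :
    ∫⁻ ω, (b.X n i ω : ℝ≥0∞) ^ 2 ∂b.μ = ENNReal.ofReal (b.v n) := by
  rw [b.lint_comp (b.X_meas n i) (fun k => (k : ℝ≥0∞) ^ 2)]
  simp_rw [b.measX]
  exact b.tsum2 n h2

end BPVE

namespace BPVE
variable {Ω : Type*} [MeasurableSpace Ω] (b : BPVE Ω)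

/-- the generation sums -/
def S (n z : ℕ) (ω : Ω) : ℕ := ∑ i ∈ Finset.range z, b.X n i ω

lemma S_meas (n z : ℕ) : Measurable (b.S n z) :=
  Finset.measurable_sum _ fun i _ => b.X_meas n i

lemma m_le_v (n : ℕ) (h2 : Summable fun i : ℕ => (i : ℝ) ^ 2 * b.p n i) :
    b.m n ≤ b.v n := by
  refine Summable.tsum_le_tsum (fun i => ?_) (b.mean_summable n) h2
  rcases Nat.eq_zero_or_pos i with h | h
  · simp [h]
  · have h1 : (1 : ℝ) ≤ (i : ℝ) := by exact_mod_cast h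
    have hii : (i : ℝ) ≤ (i : ℝ) ^ 2 := by nlinarith
    exact mul_le_mul_of_nonneg_right hii (b.p_nonneg n i)

lemma v_nonneg (n : ℕ) : 0 ≤ b.v n :=
  tsum_nonneg fun i => mul_nonneg (sq_nonneg _) (b.p_nonneg n i)

lemma msq_le_v (n : ℕ) (h2 : Summable fun i : ℕ => (i : ℝ) ^ 2 * b.p n i) :
    b.m n ^ 2 ≤ b.v n := by
  have hm0 : 0 ≤ b.m n := (b.m_pos n).le
  have hv0 : 0 ≤ b.v n := b.v_nonneg n
  have key : ∀ s : Finset ℕ, ∑ i ∈ s, (i : ℝ) * b.p n i ≤ Real.sqrt (b.v n) := by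
    intro s
    have hcs := Finset.sum_mul_sq_le_sq_mul_sq s
      (fun i => (i : ℝ) * Real.sqrt (b.p n i)) (fun i => Real.sqrt (b.p n i))
    have e1 : ∀ i : ℕ, ((i : ℝ) * Real.sqrt (b.p n i)) * Real.sqrt (b.p n i) = (i : ℝ) * b.p n i :=
      fun i => by rw [mul_assoc, Real.mul_self_sqrt (b.p_nonneg n i)]
    have e2 : ∀ i : ℕ, ((i : ℝ) * Real.sqrt (b.p n i)) ^ 2 = (i : ℝ) ^ 2 * b.p n i :=
      fun i => by rw [mul_pow, Real.sq_sqrt (b.p_nonneg n i)]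
    have e3 : ∀ i : ℕ, (Real.sqrt (b.p n i)) ^ 2 = b.p n i := fun i => Real.sq_sqrt (b.p_nonneg n i)
    simp only [e1, e2, e3] at hcs
    have h2' : ∑ i ∈ s, (i : ℝ) ^ 2 * b.p n i ≤ b.v n :=
      Summable.sum_le_tsum s (fun i _ => mul_nonneg (sq_nonneg _) (b.p_nonneg n i)) h2
    have h3 : ∑ i ∈ s, b.p n i ≤ 1 := by
      have := Summable.sum_le_tsum s (fun i _ => b.p_nonneg n i) (b.p_sum n).summable
      rwa [(b.p_sum n).tsum_eq] at this
    have hs0 : 0 ≤ ∑ i ∈ s, (i : ℝ) * b.p n i :=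
      Finset.sum_nonneg fun i _ => mul_nonneg (Nat.cast_nonneg i) (b.p_nonneg n i)
    have hsum_nonneg : 0 ≤ ∑ i ∈ s, (i:ℝ)^2 * b.p n i :=
      Finset.sum_nonneg fun i _ => mul_nonneg (sq_nonneg _) (b.p_nonneg n i)
    have : (∑ i ∈ s, (i : ℝ) * b.p n i) ^ 2 ≤ b.v n := by
      calc (∑ i ∈ s, (i : ℝ) * b.p n i) ^ 2 ≤ (∑ i ∈ s, (i:ℝ)^2 * b.p n i) * ∑ i ∈ s, b.p n i := hcs
        _ ≤ b.v n * 1 := mul_le_mul h2' h3 (Finset.sum_nonneg fun i _ => b.p_nonneg n i) hv0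
        _ = b.v n := mul_one _
    exact (Real.le_sqrt hs0 hv0).2 this
  have hmle : b.m n ≤ Real.sqrt (b.v n) := Summable.tsum_le_of_sum_le (b.mean_summable n) key
  calc b.m n ^ 2 ≤ Real.sqrt (b.v n) ^ 2 := pow_le_pow_left₀ hm0 hmle 2
    _ = b.v n := Real.sq_sqrt hv0

lemma X_meas' (n i : ℕ) : Measurable fun ω => (b.X n i ω : ℝ≥0∞) :=
  measurable_from_top.comp (b.X_meas n i)

lemma lint_prod (n : ℕ) {i j : ℕ} (hij : i ≠ j) :
    ∫⁻ ω, (b.X n i ω : ℝ≥0∞) * (b.X n j ω : ℝ≥0∞) ∂b.μ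
      = ENNReal.ofReal (b.m n) * ENNReal.ofReal (b.m n) := by
  have hind : IndepFun (fun ω => (b.X n i ω : ℝ≥0∞)) (fun ω => (b.X n j ω : ℝ≥0∞)) b.μ := by
    have h := b.X_indep.indepFun (show ((n, i) : ℕ × ℕ) ≠ (n, j) by simpa using hij)
    exact h.comp measurable_from_top measurable_from_top
  rw [lintegral_mul_eq_lintegral_mul_lintegral_of_indepFun''
    (b.X_meas' n i).aemeasurable (b.X_meas' n j).aemeasurable hind,
    b.lintX n i, b.lintX n j]

lemma lintS (n z : ℕ) :
    ∫⁻ ω, (b.S n z ω : ℝ≥0∞) ∂b.μ = z * ENNReal.ofReal (b.m n) := by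
  have : ∀ ω, (b.S n z ω : ℝ≥0∞) = ∑ i ∈ Finset.range z, (b.X n i ω : ℝ≥0∞) := by
    intro ω; rw [S]; push_cast; rfl
  rw [lintegral_congr this, lintegral_finset_sum _ (fun i _ => b.X_meas' n i)]
  simp [b.lintX n, Finset.sum_const, nsmul_eq_mul]

lemma lintS2 (n z : ℕ) (h2 : Summable fun i : ℕ => (i : ℝ) ^ 2 * b.p n i) :
    ∫⁻ ω, (b.S n z ω : ℝ≥0∞) ^ 2 ∂b.μ
      = z * ENNReal.ofReal (b.v n) + ((z * (z - 1) : ℕ) : ℝ≥0∞) * ENNReal.ofReal (b.m n) ^ 2 := by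
  have hpt : ∀ ω, (b.S n z ω : ℝ≥0∞) ^ 2
      = ∑ i ∈ Finset.range z, ∑ j ∈ Finset.range z, (b.X n i ω : ℝ≥0∞) * (b.X n j ω : ℝ≥0∞) := by
    intro ω
    have : (b.S n z ω : ℝ≥0∞) = ∑ i ∈ Finset.range z, (b.X n i ω : ℝ≥0∞) := by
      rw [S]; push_cast; rfl
    rw [this, sq, Finset.sum_mul_sum]
  rw [lintegral_congr hpt, lintegral_finset_sum _ (f := fun i ω =>
      ∑ j ∈ Finset.range z, (b.X n i ω : ℝ≥0∞) * (b.X n j ω : ℝ≥0∞)) (fun i _ => Finset.measurable_sum _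
    (fun j _ => (b.X_meas' n i).mul (b.X_meas' n j)))]
  have hrow : ∀ i ∈ Finset.range z,
      ∫⁻ ω, ∑ j ∈ Finset.range z, (b.X n i ω : ℝ≥0∞) * (b.X n j ω : ℝ≥0∞) ∂b.μ
        = ENNReal.ofReal (b.v n) + ((z - 1 : ℕ) : ℝ≥0∞) * ENNReal.ofReal (b.m n) ^ 2 := by
    intro i hi
    rw [lintegral_finset_sum _ (f := fun j ω => (b.X n i ω : ℝ≥0∞) * (b.X n j ω : ℝ≥0∞))
      (fun j _ => (b.X_meas' n i).mul (b.X_meas' n j))]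
    rw [← Finset.add_sum_erase _ _ hi]
    have hdiag : ∫⁻ ω, (b.X n i ω : ℝ≥0∞) * (b.X n i ω : ℝ≥0∞) ∂b.μ = ENNReal.ofReal (b.v n) := by
      rw [← b.lintX2 n i h2]; exact lintegral_congr fun ω => (sq _).symm
    rw [hdiag]
    congr 1
    rw [Finset.sum_congr rfl (fun j hj => b.lint_prod n
      (fun h => (Finset.ne_of_mem_erase hj) (h ▸ rfl)))]
    rw [Finset.sum_const, Finset.card_erase_of_mem hi, Finset.card_range, nsmul_eq_mul, sq]
  rw [Finset.sum_congr rfl hrow, Finset.sum_const, Finset.card_range, nsmul_eq_mul, Nat.cast_mul]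
  ring

end BPVE

namespace BPVE
variable {Ω : Type*} [MeasurableSpace Ω] (b : BPVE Ω)

lemma natid (s : ℕ) : ((s * (s - 1) : ℕ) : ℝ≥0∞) + (s : ℝ≥0∞) = (s : ℝ≥0∞) ^ 2 := by
  have h : s * (s - 1) + s = s ^ 2 := by cases s with
    | zero => rfl
    | succ t => simp [Nat.succ_sub_one]; ring
  rw [show ((s : ℝ≥0∞)) ^ 2 = ((s ^ 2 : ℕ) : ℝ≥0∞) by push_cast; ring, ← h]
  push_cast; ring

lemma SS_meas' (n z : ℕ) :
    Measurable fun ω => ((b.S n z ω * (b.S n z ω - 1) : ℕ) : ℝ≥0∞) :=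
  measurable_from_top.comp ((b.S_meas n z).mul ((b.S_meas n z).sub measurable_const))

lemma lintSS (n z : ℕ) (h2 : Summable fun i : ℕ => (i : ℝ) ^ 2 * b.p n i) :
    ∫⁻ ω, ((b.S n z ω * (b.S n z ω - 1) : ℕ) : ℝ≥0∞) ∂b.μ
      = z * ENNReal.ofReal (b.v n - b.m n)
        + ((z * (z - 1) : ℕ) : ℝ≥0∞) * ENNReal.ofReal (b.m n) ^ 2 := by
  have hadd : ∫⁻ ω, ((b.S n z ω * (b.S n z ω - 1) : ℕ) : ℝ≥0∞) ∂b.μ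
      + ∫⁻ ω, (b.S n z ω : ℝ≥0∞) ∂b.μ = ∫⁻ ω, (b.S n z ω : ℝ≥0∞) ^ 2 ∂b.μ := by
    rw [← lintegral_add_left (b.SS_meas' n z)]
    exact lintegral_congr fun ω => natid _
  rw [b.lintS n z, b.lintS2 n z h2] at hadd
  have hfin : (z : ℝ≥0∞) * ENNReal.ofReal (b.m n) ≠ ∞ :=
    ENNReal.mul_ne_top (ENNReal.natCast_ne_top z) ENNReal.ofReal_ne_top
  have hrhs : (z : ℝ≥0∞) * ENNReal.ofReal (b.v n - b.m n)
      + ((z * (z - 1) : ℕ) : ℝ≥0∞) * ENNReal.ofReal (b.m n) ^ 2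
      + (z : ℝ≥0∞) * ENNReal.ofReal (b.m n)
      = z * ENNReal.ofReal (b.v n) + ((z * (z - 1) : ℕ) : ℝ≥0∞) * ENNReal.ofReal (b.m n) ^ 2 := by
    have h : ENNReal.ofReal (b.v n - b.m n) + ENNReal.ofReal (b.m n) = ENNReal.ofReal (b.v n) := by
      rw [← ENNReal.ofReal_add (sub_nonneg.2 (b.m_le_v n h2)) (b.m_pos n).le, sub_add_cancel]
    calc (z : ℝ≥0∞) * ENNReal.ofReal (b.v n - b.m n)
          + ((z * (z - 1) : ℕ) : ℝ≥0∞) * ENNReal.ofReal (b.m n) ^ 2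
          + (z : ℝ≥0∞) * ENNReal.ofReal (b.m n)
        = (z : ℝ≥0∞) * (ENNReal.ofReal (b.v n - b.m n) + ENNReal.ofReal (b.m n))
          + ((z * (z - 1) : ℕ) : ℝ≥0∞) * ENNReal.ofReal (b.m n) ^ 2 := by ring
      _ = _ := by rw [h]
  have h2' := hadd.trans hrhs.symm
  exact (ENNReal.add_left_inj hfin).1 h2'

end BPVE

lemma meas_sum {α : Type*} {mα : MeasurableSpace α} {f : ℕ → α → ℕ} (s : Finset ℕ)
    (h : ∀ i, Measurable[mα] (f i)) : Measurable[mα] fun ω => ∑ i ∈ s, f i ω :=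
  Finset.measurable_sum s fun i _ => h i

lemma meas_nat {α : Type*} {mα : MeasurableSpace α} {f : α → ℕ}
    (h : ∀ k, MeasurableSet[mα] (f ⁻¹' {k})) : Measurable[mα] f :=
  measurable_to_countable' h

namespace BPVE
variable {Ω : Type*} [MeasurableSpace Ω] (b : BPVE Ω)

/-- the offspring variables, uncurried -/
def Xf : ℕ × ℕ → Ω → ℕ := fun q => b.X q.1 q.2

lemma Xm (q : ℕ × ℕ) : Measurable (b.Xf q) := b.X_meas q.1 q.2

lemma X_indep' : iIndepFun b.Xf b.μ := b.X_indep

/-- σ-algebra of the first `n` generations' offspring variables -/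
def G (n : ℕ) : MeasurableSpace Ω :=
  ⨆ q ∈ {q : ℕ × ℕ | q.1 < n}, MeasurableSpace.comap (b.Xf q) inferInstance

/-- σ-algebra of the `n`-th generation offspring variables -/
def H (n : ℕ) : MeasurableSpace Ω :=
  ⨆ q ∈ {q : ℕ × ℕ | q.1 = n}, MeasurableSpace.comap (b.Xf q) inferInstance

lemma G_le (n : ℕ) : b.G n ≤ ‹MeasurableSpace Ω› :=
  iSup₂_le fun q _ => (b.Xm q).comap_le

lemma H_le (n : ℕ) : b.H n ≤ ‹MeasurableSpace Ω› :=
  iSup₂_le fun q _ => (b.Xm q).comap_le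

lemma G_mono {n n' : ℕ} (h : n ≤ n') : b.G n ≤ b.G n' :=
  biSup_mono fun q hq => lt_of_lt_of_le hq h

lemma indepGH (n : ℕ) : Indep (b.G n) (b.H n) b.μ := by
  haveI := b.prob
  unfold G H
  refine indep_iSup_of_disjoint (fun q => (b.Xm q).comap_le) b.X_indep'.iIndep ?_
  rw [Set.disjoint_left]
  rintro q hq hq'
  simp only [Set.mem_setOf_eq] at hq hq'
  omega

lemma X_mem_H (n i : ℕ) : Measurable[b.H n] (b.X n i) := by
  apply Measurable.of_comap_le
  unfold H
  exact le_iSup_of_le (n, i) (le_iSup_of_le rfl le_rfl)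

lemma X_mem_G (n i N : ℕ) (h : n < N) : Measurable[b.G N] (b.X n i) := by
  apply Measurable.of_comap_le
  unfold G
  exact le_iSup_of_le (n, i) (le_iSup_of_le h le_rfl)

lemma S_mem_H (n z : ℕ) : Measurable[b.H n] (b.S n z) :=
  meas_sum _ fun i => b.X_mem_H n i

lemma Z_mem_G : ∀ n, Measurable[b.G n] (b.Z n) := by
  intro n
  induction n with
  | zero =>
    have h0 : b.Z 0 = fun _ => 1 := funext b.Z_zero
    rw [h0]; exact @measurable_const _ _ _ (b.G 0) _
  | succ n ih =>
    have hZn : Measurable[b.G (n + 1)] (b.Z n) :=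
      ih.mono (b.G_mono (Nat.le_succ n)) le_rfl
    have hS : ∀ z, Measurable[b.G (n + 1)] (b.S n z) := fun z =>
      meas_sum _ fun i => b.X_mem_G n i (n + 1) (Nat.lt_succ_self n)
    refine meas_nat fun k => ?_
    have hset : b.Z (n + 1) ⁻¹' {k}
        = ⋃ z, {ω | b.Z n ω = z} ∩ {ω | b.S n z ω = k} := by
      ext ω
      simp only [Set.mem_preimage, Set.mem_singleton_iff, Set.mem_iUnion, Set.mem_inter_iff,
        Set.mem_setOf_eq]
      constructor
      · intro h; exact ⟨b.Z n ω, rfl, by rw [← h, b.Z_succ n ω]; rfl⟩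
      · rintro ⟨z, hz, hk⟩; rw [b.Z_succ n ω, ← hk]; rw [← hz]; rfl
    rw [hset]
    exact MeasurableSet.iUnion fun z =>
      (hZn (measurableSet_singleton z)).inter (hS z (measurableSet_singleton k))

lemma Z_meas (n : ℕ) : Measurable (b.Z n) := (b.Z_mem_G n).mono (b.G_le n) le_rfl

lemma lint_indicator_mul (n z : ℕ) {g : Ω → ℝ≥0∞} (hg : Measurable[b.H n] g) :
    ∫⁻ ω, ({ω | b.Z n ω = z}).indicator (1 : Ω → ℝ≥0∞) ω * g ω ∂b.μ
      = b.μ {ω | b.Z n ω = z} * ∫⁻ ω, g ω ∂b.μ := by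
  have hset : MeasurableSet[b.G n] {ω | b.Z n ω = z} :=
    b.Z_mem_G n (measurableSet_singleton z)
  have hind : Measurable[b.G n] (({ω | b.Z n ω = z}).indicator (1 : Ω → ℝ≥0∞)) :=
    (@measurable_const ℝ≥0∞ Ω _ (b.G n) 1).indicator hset
  rw [lintegral_mul_eq_lintegral_mul_lintegral_of_independent_measurableSpace
    (b.G_le n) (b.H_le n) (b.indepGH n) hind hg,
    lintegral_indicator_one (b.G_le n _ hset)]

lemma lint_succ (n : ℕ) (g : ℕ → ℝ≥0∞) :
    ∫⁻ ω, g (b.Z (n + 1) ω) ∂b.μ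
      = ∑' z, b.μ {ω | b.Z n ω = z} * ∫⁻ ω, g (b.S n z ω) ∂b.μ := by
  have hpt : ∀ ω, g (b.Z (n + 1) ω)
      = ∑' z, ({ω | b.Z n ω = z}).indicator (1 : Ω → ℝ≥0∞) ω * g (b.S n z ω) := by
    intro ω
    rw [tsum_eq_single (b.Z n ω) (fun z hz => by
      rw [Set.indicator_of_notMem (by simpa using (Ne.symm hz)), zero_mul])]
    rw [Set.indicator_of_mem (by simp), Pi.one_apply, one_mul]
    congr 1
    rw [b.Z_succ n ω]; rfl
  have hmeas : ∀ z : ℕ, AEMeasurable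
      (fun ω => ({ω | b.Z n ω = z}).indicator (1 : Ω → ℝ≥0∞) ω * g (b.S n z ω)) b.μ := by
    intro z
    have hs : MeasurableSet {ω | b.Z n ω = z} := (b.Z_meas n) (measurableSet_singleton z)
    exact ((measurable_one.indicator hs).mul
      (measurable_from_top.comp (b.S_meas n z))).aemeasurable
  rw [lintegral_congr hpt, lintegral_tsum hmeas]
  exact tsum_congr fun z => b.lint_indicator_mul n z
    (measurable_from_top.comp (b.S_mem_H n z))

end BPVE

namespace BPVE
variable {Ω : Type*} [MeasurableSpace Ω] (b : BPVE Ω)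

lemma P_succ (n : ℕ) : b.P (n + 1) = b.P n * b.m n := by
  rw [P, P, Finset.prod_range_succ]

lemma moments (hm2 : ∀ k, Summable fun i : ℕ => (i : ℝ) ^ 2 * b.p k i) : ∀ n : ℕ,
    (∫⁻ ω, (b.Z n ω : ℝ≥0∞) ∂b.μ = ENNReal.ofReal (b.P n)) ∧
    (∫⁻ ω, ((b.Z n ω * (b.Z n ω - 1) : ℕ) : ℝ≥0∞) ∂b.μ = ENNReal.ofReal (b.A n - b.P n)) ∧
    b.P n ≤ b.A n := by
  haveI := b.prob
  intro n
  induction n with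
  | zero =>
    have h0 : b.Z 0 = fun _ => 1 := funext b.Z_zero
    have hP0 : b.P 0 = 1 := by simp [P]
    have hA0 : b.A 0 = 1 := by simp [A, hP0]
    refine ⟨?_, ?_, by rw [hP0, hA0]⟩
    · simp [h0, hP0]
    · simp [h0, hA0, hP0]
  | succ n ih =>
    obtain ⟨hM, hK, hle⟩ := ih
    have hP := b.P_pos n
    have hm := b.m_pos n
    have hvm := b.m_le_v n (hm2 n)
    have hZsum : ∑' z : ℕ, (z : ℝ≥0∞) * b.μ {ω | b.Z n ω = z} = ENNReal.ofReal (b.P n) := by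
      rw [← b.lint_comp (b.Z_meas n) (fun k => (k : ℝ≥0∞))]; exact hM
    have hKsum : ∑' z : ℕ, ((z * (z - 1) : ℕ) : ℝ≥0∞) * b.μ {ω | b.Z n ω = z}
        = ENNReal.ofReal (b.A n - b.P n) := by
      rw [← b.lint_comp (b.Z_meas n) (fun k => ((k * (k - 1) : ℕ) : ℝ≥0∞))]; exact hK
    have hreal : b.P n * (b.v n - b.m n) + (b.A n - b.P n) * b.m n ^ 2
        = b.A (n + 1) - b.P (n + 1) := by
      rw [A, A, b.P_succ n, Finset.sum_range_succ]
      field_simp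
      ring
    have hle' : b.P (n + 1) ≤ b.A (n + 1) := by
      nlinarith [sq_nonneg (b.m n), mul_nonneg hP.le (sub_nonneg.2 hvm),
        mul_nonneg (sub_nonneg.2 hle) (sq_nonneg (b.m n))]
    refine ⟨?_, ?_, hle'⟩
    · rw [b.lint_succ n (fun k => (k : ℝ≥0∞))]
      have h1 : ∀ z : ℕ, b.μ {ω | b.Z n ω = z} * ∫⁻ ω, (b.S n z ω : ℝ≥0∞) ∂b.μ
          = ((z : ℝ≥0∞) * b.μ {ω | b.Z n ω = z}) * ENNReal.ofReal (b.m n) := fun z => by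
        rw [b.lintS n z]; ring
      rw [tsum_congr h1, ENNReal.tsum_mul_right, hZsum,
        ← ENNReal.ofReal_mul hP.le, ← b.P_succ n]
    · rw [b.lint_succ n (fun k => ((k * (k - 1) : ℕ) : ℝ≥0∞))]
      have h1 : ∀ z : ℕ, b.μ {ω | b.Z n ω = z}
            * ∫⁻ ω, ((b.S n z ω * (b.S n z ω - 1) : ℕ) : ℝ≥0∞) ∂b.μ
          = ((z : ℝ≥0∞) * b.μ {ω | b.Z n ω = z}) * ENNReal.ofReal (b.v n - b.m n)
            + (((z * (z - 1) : ℕ) : ℝ≥0∞) * b.μ {ω | b.Z n ω = z})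
              * ENNReal.ofReal (b.m n) ^ 2 := fun z => by
        rw [b.lintSS n z (hm2 n)]; ring
      rw [tsum_congr h1, ENNReal.tsum_add, ENNReal.tsum_mul_right, ENNReal.tsum_mul_right,
        hZsum, hKsum, ← ENNReal.ofReal_pow hm.le, ← ENNReal.ofReal_mul hP.le,
        ← ENNReal.ofReal_mul (sub_nonneg.2 hle),
        ← ENNReal.ofReal_add (mul_nonneg hP.le (sub_nonneg.2 hvm))
          (mul_nonneg (sub_nonneg.2 hle) (sq_nonneg _)), hreal]

lemma lintZ2 (hm2 : ∀ k, Summable fun i : ℕ => (i : ℝ) ^ 2 * b.p k i) (n : ℕ) :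
    ∫⁻ ω, (b.Z n ω : ℝ≥0∞) ^ 2 ∂b.μ = ENNReal.ofReal (b.A n) := by
  obtain ⟨hM, hK, hle⟩ := b.moments hm2 n
  have hmeas : Measurable fun ω => ((b.Z n ω * (b.Z n ω - 1) : ℕ) : ℝ≥0∞) :=
    measurable_from_top.comp ((b.Z_meas n).mul ((b.Z_meas n).sub measurable_const))
  have hsplit : ∫⁻ ω, ((b.Z n ω * (b.Z n ω - 1) : ℕ) : ℝ≥0∞) ∂b.μ
      + ∫⁻ ω, (b.Z n ω : ℝ≥0∞) ∂b.μ = ∫⁻ ω, (b.Z n ω : ℝ≥0∞) ^ 2 ∂b.μ := by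
    rw [← lintegral_add_left hmeas]
    exact lintegral_congr fun ω => natid _
  rw [← hsplit, hM, hK, ← ENNReal.ofReal_add (sub_nonneg.2 hle) (b.P_pos n).le,
    sub_add_cancel]

lemma intZ2 (hm2 : ∀ k, Summable fun i : ℕ => (i : ℝ) ^ 2 * b.p k i) (n : ℕ) :
    ∫ ω, (b.Z n ω : ℝ) ^ 2 ∂b.μ = b.A n := by
  have hmeas : Measurable fun ω => (b.Z n ω : ℝ) ^ 2 :=
    (measurable_from_top.comp (b.Z_meas n)).pow_const 2
  rw [integral_eq_lintegral_of_nonneg_ae (Filter.Eventually.of_forall fun ω => sq_nonneg _)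
    hmeas.aestronglyMeasurable]
  have hpt : ∀ ω, ENNReal.ofReal ((b.Z n ω : ℝ) ^ 2) = (b.Z n ω : ℝ≥0∞) ^ 2 := fun ω => by
    rw [ENNReal.ofReal_pow (Nat.cast_nonneg _), ENNReal.ofReal_natCast]
  rw [lintegral_congr hpt, b.lintZ2 hm2 n,
    ENNReal.toReal_ofReal ((b.P_pos n).le.trans (b.moments hm2 n).2.2)]

lemma intW2 (hm2 : ∀ k, Summable fun i : ℕ => (i : ℝ) ^ 2 * b.p k i) (n : ℕ) :
    ∫ ω, b.W n ω ^ 2 ∂b.μ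
      = 1 + ∑ k ∈ Finset.range n, (1 / b.P k) * (b.v k / b.m k ^ 2 - 1) := by
  have hP := b.P_pos n
  have h1 : ∀ ω, b.W n ω ^ 2 = (b.Z n ω : ℝ) ^ 2 * (1 / b.P n ^ 2) := fun ω => by
    rw [W, div_pow]; ring
  simp_rw [h1]
  rw [integral_mul_const, b.intZ2 hm2 n, A]
  field_simp

end BPVE


end

/-- **Second moment identity (after Jagers).** For a branching process in a varying
environment with `m_k(2) < ∞` for all `k`, one has
`𝔼 W_n² = 1 + Σ_{k<n} (1/P_k)(m_k(2)/m_k² − 1)`; consequently `(W_n)` is bounded in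
`L²` if and only if the series `Σ_k (1/P_k)(m_k(2)/m_k² − 1)` converges. -/
theorem second_moment_identity
    {Ω : Type*} [MeasurableSpace Ω] (b : BPVE Ω)
    (hm2 : ∀ k, Summable fun i : ℕ => (i : ℝ) ^ 2 * b.p k i) :
    (∀ n : ℕ, 1 ≤ n →
      ∫ ω, b.W n ω ^ 2 ∂b.μ =
        1 + ∑ k ∈ Finset.range n,
          (1 / b.P k) * ((∑' i : ℕ, (i : ℝ) ^ 2 * b.p k i) / b.m k ^ 2 - 1)) ∧
    ((∃ C : ℝ, ∀ n : ℕ, ∫ ω, b.W n ω ^ 2 ∂b.μ ≤ C) ↔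
      ∃ l : ℝ, Tendsto
        (fun N : ℕ => ∑ k ∈ Finset.range N,
          (1 / b.P k) * ((∑' i : ℕ, (i : ℝ) ^ 2 * b.p k i) / b.m k ^ 2 - 1))
        atTop (nhds l)) := by
  haveI := b.prob
  have hW := b.intW2 hm2
  constructor
  · intro n _
    exact hW n
  · have vdef : ∀ k, (∑' i : ℕ, (i : ℝ) ^ 2 * b.p k i) = b.v k := fun k => rfl
    simp only [vdef]
    have ht0 : ∀ k, 0 ≤ (1 / b.P k) * (b.v k / b.m k ^ 2 - 1) := fun k =>
      mul_nonneg (one_div_nonneg.2 (b.P_pos k).le)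
        (sub_nonneg.2 ((one_le_div (pow_pos (b.m_pos k) 2)).2 (b.msq_le_v k (hm2 k))))
    have hmono : Monotone fun N : ℕ =>
        ∑ k ∈ Finset.range N, (1 / b.P k) * (b.v k / b.m k ^ 2 - 1) :=
      monotone_nat_of_le_succ fun N => by
        rw [Finset.sum_range_succ]; linarith [ht0 N]
    constructor
    · rintro ⟨C, hC⟩
      refine ⟨⨆ N : ℕ, ∑ k ∈ Finset.range N, (1 / b.P k) * (b.v k / b.m k ^ 2 - 1),
        tendsto_atTop_ciSup hmono ⟨C - 1, ?_⟩⟩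
      rintro x ⟨N, rfl⟩
      have h := hC N
      rw [hW N] at h
      linarith
    · rintro ⟨l, hl⟩
      refine ⟨1 + l, fun n => ?_⟩
      rw [hW n]
      have := hmono.ge_of_tendsto hl n
      linarith
end
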